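/- arXiv:1202.6431 — 12 statements merged into one kernel-verified Lean document; each statement's English description precedes it below -/
import Mathlib

section
/- If A is an m-order n-dimensional M-tensor, i.e., A = cI - B where B is an entrywise nonnegative tensor and c > ρ(B) (the spectral radius of B), then every eigenvalue λ of A (a pair (λ,x) with x ≠ 0 satisfying A x^{m-1} = λ x^{[m-1]}) has positive real part. -/
open scoped BigOperators

/-- Action of an `(k+1)`-order `n`-dimensional real tensor on a complex vector:
`(A x^{m-1})_i = ∑_{i2,...,im} A_{i i2...im} x_{i2} ⋯ x_{im}` (here `k = m-1`). -/
noncomputable def tApplyC {n k : ℕ} (A : Fin n → (Fin k → Fin n) → ℝ) (x : Fin n → ℂ) (i : Fin n) : ℂ :=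
  ∑ j : Fin k → Fin n, (A i j : ℂ) * ∏ t, x (j t)

/-- Real version of the tensor action. -/
def tApplyR {n k : ℕ} (A : Fin n → (Fin k → Fin n) → ℝ) (x : Fin n → ℝ) (i : Fin n) : ℝ :=
  ∑ j : Fin k → Fin n, A i j * ∏ t, x (j t)

/-- `(lam, x)` is an eigenvalue-eigenvector pair: `x ≠ 0` and `A x^{m-1} = lam x^{[m-1]}`. -/
def IsEigPair {n k : ℕ} (A : Fin n → (Fin k → Fin n) → ℝ) (lam : ℂ) (x : Fin n → ℂ) : Prop :=
  x ≠ 0 ∧ ∀ i, tApplyC A x i = lam * x i ^ k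

/-- `lam` is an eigenvalue of `A`. -/
def IsEig {n k : ℕ} (A : Fin n → (Fin k → Fin n) → ℝ) (lam : ℂ) : Prop :=
  ∃ x, IsEigPair A lam x

/-- The set of moduli of eigenvalues of `A`. -/
def modSet {n k : ℕ} (A : Fin n → (Fin k → Fin n) → ℝ) : Set ℝ :=
  {r | ∃ lam, IsEig A lam ∧ r = ‖lam‖}

/-- The spectral radius: supremum of moduli of eigenvalues. -/
noncomputable def specRad {n k : ℕ} (A : Fin n → (Fin k → Fin n) → ℝ) : ℝ :=
  sSup (modSet A)

/-- The identity tensor: entries `δ_{i i2...im}`. -/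
noncomputable def idT (n k : ℕ) : Fin n → (Fin k → Fin n) → ℝ :=
  fun i j => if (∀ t, j t = i) then 1 else 0

/-- Entrywise nonnegative tensor. -/
def NonnegT {n k : ℕ} (A : Fin n → (Fin k → Fin n) → ℝ) : Prop := ∀ i j, 0 ≤ A i j

/-- `A` is an M-tensor: `A = c I - B` with `B ≥ 0` and `c > ρ(B)`. -/
def IsMTensor {n k : ℕ} (A : Fin n → (Fin k → Fin n) → ℝ) : Prop :=
  ∃ (B : Fin n → (Fin k → Fin n) → ℝ) (c : ℝ),
    NonnegT B ∧ specRad B < c ∧ ∀ i j, A i j = c * idT n k i j - B i j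

/-- `ρ(A)` is an eigenvalue of `A` and bounds the modulus of every eigenvalue
(the Yang–Yang theorem for nonnegative tensors). -/
def HasSpecRad {n k : ℕ} (A : Fin n → (Fin k → Fin n) → ℝ) : Prop :=
  IsEig A (specRad A) ∧ ∀ lam, IsEig A lam → ‖lam‖ ≤ specRad A

/-- Off-diagonal entries of `A` are all nonpositive (`A ∈ 𝕫`). -/
def ZTensor {n k : ℕ} (A : Fin n → (Fin k → Fin n) → ℝ) : Prop :=
  ∀ i j, (¬ ∀ t, j t = i) → A i j ≤ 0

/-- Irreducibility of a tensor. -/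
def IrreducibleT {n k : ℕ} (A : Fin n → (Fin k → Fin n) → ℝ) : Prop :=
  ¬ ∃ S : Set (Fin n), S.Nonempty ∧ S ≠ Set.univ ∧
      ∀ i ∈ S, ∀ j : Fin k → Fin n, (∀ t, j t ∉ S) → A i j = 0

/-- `C_i = ∑_{(i2,...,im) not all equal to i} |A_{i i2...im}|`. -/
noncomputable def offDiagSum {n k : ℕ} (A : Fin n → (Fin k → Fin n) → ℝ) (i : Fin n) : ℝ :=
  ∑ j ∈ Finset.univ.filter (fun j : Fin k → Fin n => ¬ ∀ t, j t = i), |A i j|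

lemma tApplyC_idT {n k : ℕ} (x : Fin n → ℂ) (i : Fin n) :
    tApplyC (idT n k) x i = x i ^ k := by
  unfold tApplyC idT
  rw [Finset.sum_eq_single (fun _ => i)]
  · simp [Finset.prod_const]
  · intro j _ hj
    have : ¬ ∀ t, j t = i := fun h => hj (funext h)
    simp [this]
  · simp

/-- every eigenvalue of an M-tensor `A = cI - B` has positive real part. -/
theorem mTensor_eig_re_pos {n k : ℕ} (A B : Fin n → (Fin k → Fin n) → ℝ) (c : ℝ)
    (hB : NonnegT B) (hbdd : BddAbove (modSet B)) (hc : specRad B < c)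
    (hA : ∀ i j, A i j = c * idT n k i j - B i j) :
    ∀ lam : ℂ, IsEig A lam → 0 < lam.re := by
  intro lam ⟨x, hx, hEq⟩
  have key : ∀ i, tApplyC B x i = (c - lam) * x i ^ k := by
    intro i
    have h1 : tApplyC A x i = c * tApplyC (idT n k) x i - tApplyC B x i := by
      simp only [tApplyC, Finset.mul_sum, ← Finset.sum_sub_distrib]
      refine Finset.sum_congr rfl fun j _ => ?_
      rw [hA]; push_cast; ring
    rw [tApplyC_idT, hEq i] at h1
    linear_combination h1
  have heig : IsEig B (c - lam) := ⟨x, hx, key⟩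
  have hmem : ‖(c : ℂ) - lam‖ ∈ modSet B := ⟨c - lam, heig, rfl⟩
  have hle : ‖(c : ℂ) - lam‖ ≤ specRad B := le_csSup hbdd hmem
  have hre : ((c : ℂ) - lam).re ≤ ‖(c : ℂ) - lam‖ := Complex.re_le_norm _
  have hcr : ((c : ℂ) - lam).re = c - lam.re := by simp
  linarith [hcr ▸ hre]
end

section
/- Let A be an M-tensor, written A = cI - B with B nonnegative and c > ρ(B). Then τ(A) := min{Re λ : λ an eigenvalue of A} equals c - ρ(B); in particular τ(A) > 0 and τ(A) is itself a (real) eigenvalue of A possessing a nonnegative eigenvector. -/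
open scoped BigOperators

lemma idT_apply {n k : ℕ} (x : Fin n → ℂ) (i : Fin n) :
    ∑ j : Fin k → Fin n, ((idT n k i j : ℝ) : ℂ) * ∏ t, x (j t) = x i ^ k := by
  rw [Finset.sum_eq_single (fun _ => i)]
  · simp [idT, Finset.prod_const]
  · intro j _ hj
    have : ¬ ∀ t, j t = i := by
      intro h; exact hj (funext h)
    simp [idT, this]
  · simp

lemma tApplyC_sub {n k : ℕ} (A B : Fin n → (Fin k → Fin n) → ℝ) (c : ℝ)
    (hA : ∀ i j, A i j = c * idT n k i j - B i j) (x : Fin n → ℂ) (i : Fin n) :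
    tApplyC A x i = c * x i ^ k - tApplyC B x i := by
  unfold tApplyC
  have : ∀ j : Fin k → Fin n, ((A i j : ℝ) : ℂ) * ∏ t, x (j t)
      = (c : ℂ) * (((idT n k i j : ℝ) : ℂ) * ∏ t, x (j t)) - ((B i j : ℝ) : ℂ) * ∏ t, x (j t) := by
    intro j; rw [hA]; push_cast; ring
  rw [Finset.sum_congr rfl (fun j _ => this j), Finset.sum_sub_distrib, ← Finset.mul_sum,
    idT_apply]

lemma eig_shift {n k : ℕ} (A B : Fin n → (Fin k → Fin n) → ℝ) (c : ℝ)
    (hA : ∀ i j, A i j = c * idT n k i j - B i j) (lam : ℂ) :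
    IsEig A lam ↔ IsEig B ((c : ℂ) - lam) := by
  constructor
  · rintro ⟨x, hx, h⟩
    exact ⟨x, hx, fun i => by have := h i; rw [tApplyC_sub A B c hA] at this; linear_combination -this⟩
  · rintro ⟨x, hx, h⟩
    exact ⟨x, hx, fun i => by have := h i; rw [tApplyC_sub A B c hA]; linear_combination -this⟩

/-- for an M-tensor `A = cI - B`, `τ(A) = c - ρ(B) > 0` and `τ(A)` is an
eigenvalue of `A` with a nonnegative eigenvector (assuming Yang–Yang for `B`). -/
theorem mTensor_tau {n k : ℕ} (A B : Fin n → (Fin k → Fin n) → ℝ) (c : ℝ)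
    (hB : NonnegT B) (hbdd : BddAbove (modSet B)) (hc : specRad B < c)
    (hA : ∀ i j, A i j = c * idT n k i j - B i j)
    (hYY : ∃ x : Fin n → ℝ, x ≠ 0 ∧ (∀ i, 0 ≤ x i) ∧
      IsEigPair B ((specRad B : ℝ) : ℂ) (fun i => (x i : ℂ))) :
    sInf {r : ℝ | ∃ lam : ℂ, IsEig A lam ∧ r = lam.re} = c - specRad B ∧
    0 < c - specRad B ∧
    ∃ x : Fin n → ℝ, x ≠ 0 ∧ (∀ i, 0 ≤ x i) ∧
      IsEigPair A ((c - specRad B : ℝ) : ℂ) (fun i => (x i : ℂ)) := by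
  obtain ⟨x, hx0, hxnn, hxne, hxeig⟩ := hYY
  have hbound : ∀ lam, IsEig B lam → ‖lam‖ ≤ specRad B := by
    intro lam hlam
    exact le_csSup hbdd ⟨lam, hlam, rfl⟩
  -- the eigenpair for A
  have hAeig : IsEigPair A ((c - specRad B : ℝ) : ℂ) (fun i => (x i : ℂ)) := by
    refine ⟨hxne, fun i => ?_⟩
    rw [tApplyC_sub A B c hA, hxeig i]
    push_cast; ring
  refine ⟨?_, by linarith, x, hx0, hxnn, hAeig⟩
  have hmem : (c - specRad B) ∈ {r : ℝ | ∃ lam : ℂ, IsEig A lam ∧ r = lam.re} := by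
    refine ⟨((c - specRad B : ℝ) : ℂ), ⟨_, hAeig⟩, by simp⟩
  have hlb : ∀ r ∈ {r : ℝ | ∃ lam : ℂ, IsEig A lam ∧ r = lam.re}, c - specRad B ≤ r := by
    rintro r ⟨lam, hlam, rfl⟩
    have hBe : IsEig B ((c : ℂ) - lam) := (eig_shift A B c hA lam).mp hlam
    have h1 : ‖(c : ℂ) - lam‖ ≤ specRad B := hbound _ hBe
    have h2 : ((c : ℂ) - lam).re ≤ ‖(c : ℂ) - lam‖ := Complex.re_le_norm _
    have h3 : ((c : ℂ) - lam).re = c - lam.re := by simp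
    linarith
  exact le_antisymm (csInf_le ⟨c - specRad B, hlb⟩ hmem) (le_csInf ⟨_, hmem⟩ hlb)
end

section
/- Let A be a tensor whose off-diagonal entries are all nonpositive. Then A is an M-tensor (i.e., A = cI - B for some nonnegative tensor B and real c > ρ(B)) if and only if every eigenvalue of A has a positive real part. -/
open scoped BigOperators

lemma idT_sum {n k : ℕ} (x : Fin n → ℂ) (i : Fin n) :
    ∑ j : Fin k → Fin n, (idT n k i j : ℂ) * ∏ t, x (j t) = x i ^ k := by
  rw [Finset.sum_eq_single (fun _ => i)]
  · simp [idT, Finset.prod_const]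
  · intro j _ hj
    have hne : ¬ ∀ t, j t = i := fun h => hj (funext h)
    simp [idT, hne]
  · simp

lemma tApplyC_MDecomp {n k : ℕ} {A B : Fin n → (Fin k → Fin n) → ℝ} {c : ℝ}
    (hAB : ∀ i j, A i j = c * idT n k i j - B i j) (x : Fin n → ℂ) (i : Fin n) :
    tApplyC A x i = c * x i ^ k - tApplyC B x i := by
  unfold tApplyC
  have h : ∀ j : Fin k → Fin n,
      ((A i j : ℝ) : ℂ) * ∏ t, x (j t)
        = c * ((idT n k i j : ℂ) * ∏ t, x (j t)) - (B i j : ℂ) * ∏ t, x (j t) := by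
    intro j; rw [hAB]; push_cast; ring
  rw [Finset.sum_congr rfl (fun j _ => h j), Finset.sum_sub_distrib, ← Finset.mul_sum, idT_sum]

lemma isEig_shift {n k : ℕ} {A B : Fin n → (Fin k → Fin n) → ℝ} {c : ℝ}
    (hAB : ∀ i j, A i j = c * idT n k i j - B i j) {mu : ℂ}
    (h : IsEig B mu) : IsEig A ((c : ℂ) - mu) := by
  obtain ⟨x, hx, hxe⟩ := h
  exact ⟨x, hx, fun i => by rw [tApplyC_MDecomp hAB, hxe]; ring⟩

/-- a tensor in `𝕫` is an M-tensor iff every eigenvalue has positive real part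
(assuming Yang–Yang for nonnegative tensors). -/
theorem mTensor_iff_re_pos {n k : ℕ} (A : Fin n → (Fin k → Fin n) → ℝ) (hZ : ZTensor A)
    (hYY : ∀ B : Fin n → (Fin k → Fin n) → ℝ, NonnegT B → HasSpecRad B) :
    IsMTensor A ↔ ∀ lam : ℂ, IsEig A lam → 0 < lam.re := by
  constructor
  · rintro ⟨B, c, hB, hlt, hAB⟩ lam hlam
    have hBA : ∀ i j, B i j = c * idT n k i j - A i j := fun i j => by
      have := hAB i j; linarith
    have hEigB : IsEig B ((c : ℂ) - lam) := by
      have := isEig_shift hBA hlam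
      simpa using this
    have hbound : ‖(c : ℂ) - lam‖ ≤ specRad B := (hYY B hB).2 _ hEigB
    have hre : ((c : ℂ) - lam).re ≤ ‖(c : ℂ) - lam‖ := Complex.re_le_norm _
    have : ((c : ℂ) - lam).re = c - lam.re := by simp
    linarith
  · intro h
    set c : ℝ := ∑ i, |A i (fun _ => i)| with hc
    set B : Fin n → (Fin k → Fin n) → ℝ := fun i j => c * idT n k i j - A i j with hBdef
    have hAB : ∀ i j, A i j = c * idT n k i j - B i j := fun i j => by simp [hBdef]
    have hBnn : NonnegT B := by
      intro i j
      by_cases hj : ∀ t, j t = i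
      · have hji : j = fun _ => i := funext hj
        have h1 : |A i (fun _ => i)| ≤ c :=
          Finset.single_le_sum (f := fun i => |A i (fun _ => i)|)
            (fun _ _ => abs_nonneg _) (Finset.mem_univ i)
        have h2 := le_abs_self (A i (fun _ => i))
        have hid : idT n k i (fun _ => i) = 1 := by simp [idT]
        simp only [hBdef, hid, mul_one, hji]
        linarith
      · have := hZ i j hj
        simp only [hBdef, idT, if_neg hj, mul_zero]
        linarith
    have hEig : IsEig A ((c : ℂ) - (specRad B : ℂ)) := isEig_shift hAB (hYY B hBnn).1
    have hpos := h _ hEig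
    have hre : ((c : ℂ) - (specRad B : ℂ)).re = c - specRad B := by simp
    rw [hre] at hpos
    exact ⟨B, c, hBnn, by linarith, hAB⟩
end

section
/- Let A have nonpositive off-diagonal entries and decompose A = λI - B with λ ≥ max_i A_{i...i} (so B is nonnegative). Then A is an M-tensor if and only if λ > ρ(B). -/
open scoped BigOperators

lemma eig_shift_s7 {n k : ℕ} (A A' : Fin n → (Fin k → Fin n) → ℝ) (d : ℝ)
    (h : ∀ i j, A i j = A' i j + d * idT n k i j) (μ : ℂ) (x : Fin n → ℂ)
    (hx : IsEigPair A μ x) : IsEigPair A' (μ - d) x := by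
  obtain ⟨hne, heq⟩ := hx
  refine ⟨hne, fun i => ?_⟩
  have h1 : tApplyC A x i = tApplyC A' x i + (d : ℂ) * tApplyC (idT n k) x i := by
    unfold tApplyC
    rw [Finset.mul_sum, ← Finset.sum_add_distrib]
    congr 1; funext j
    have := h i j
    push_cast [this]
    ring
  have := heq i
  rw [h1, tApplyC_idT] at this
  have hpow : tApplyC A' x i = μ * x i ^ k - (d : ℂ) * x i ^ k := by linear_combination this
  rw [hpow]; ring

/-- for `A ∈ 𝕫` decomposed as `A = λ I - B` with `λ ≥ max_i A_{i...i}`,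
`A` is an M-tensor iff `λ > ρ(B)`. -/
theorem mTensor_iff_lam_gt_specRad {n k : ℕ} (A B : Fin n → (Fin k → Fin n) → ℝ) (lam : ℝ)
    (hZ : ZTensor A) (hlam : ∀ i, A i (fun _ => i) ≤ lam)
    (hB : ∀ i j, B i j = lam * idT n k i j - A i j)
    (hYY : ∀ C : Fin n → (Fin k → Fin n) → ℝ, NonnegT C → HasSpecRad C) :
    IsMTensor A ↔ specRad B < lam := by
  have hBnn : NonnegT B := by
    intro i j
    rw [hB i j]
    by_cases hd : ∀ t, j t = i
    · have hj : j = fun _ => i := funext hd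
      simp only [idT, if_pos hd, mul_one]
      have := hlam i
      rw [hj]
      linarith
    · have := hZ i j hd
      simp only [idT, if_neg hd, mul_zero]
      linarith
  constructor
  · rintro ⟨C, c, hCnn, hρ, hAC⟩
    -- B = C + (lam - c) • idT
    have hBC : ∀ i j, B i j = C i j + (lam - c) * idT n k i j := by
      intro i j
      rw [hB i j, hAC i j]; ring
    obtain ⟨⟨x, hx⟩, _⟩ := hYY B hBnn
    have hx' : IsEigPair C ((specRad B : ℂ) - ((lam - c : ℝ) : ℂ)) x :=
      eig_shift_s7 B C (lam - c) hBC _ x hx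
    have hbound := (hYY C hCnn).2 _ ⟨x, hx'⟩
    have : ‖(specRad B : ℂ) - ((lam - c : ℝ) : ℂ)‖ = |specRad B - (lam - c)| := by
      rw [show (specRad B : ℂ) - ((lam - c : ℝ) : ℂ) = ((specRad B - (lam - c) : ℝ) : ℂ) by push_cast; ring]
      rw [Complex.norm_real, Real.norm_eq_abs]
    rw [this] at hbound
    have h2 : specRad B - (lam - c) ≤ |specRad B - (lam - c)| := le_abs_self _
    linarith
  · intro hlt
    exact ⟨B, lam, hBnn, hlt, fun i j => by linarith [hB i j]⟩
end

section
/- If a tensor A with nonpositive off-diagonal entries is strictly diagonally dominant with all nonnegative diagonal entries, then A is an M-tensor; equivalently, every eigenvalue of A has positive real part. -/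
open scoped BigOperators

lemma eig_rowBound {n k : ℕ} (B : Fin n → (Fin k → Fin n) → ℝ) (hB : NonnegT B)
    (lam : ℂ) (hl : IsEig B lam) : ∃ i, ‖lam‖ ≤ ∑ j, B i j := by
  obtain ⟨x, hx0, hx⟩ := hl
  obtain ⟨i0, hi0⟩ := Function.ne_iff.mp hx0
  have hi0' : x i0 ≠ 0 := by simpa using hi0
  obtain ⟨i, -, hi⟩ := Finset.exists_max_image Finset.univ (fun i => ‖x i‖)
    ⟨i0, Finset.mem_univ i0⟩
  have hM : 0 < ‖x i‖ :=
    lt_of_lt_of_le (norm_pos_iff.mpr hi0') (hi i0 (Finset.mem_univ _))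
  refine ⟨i, ?_⟩
  have h1 : ‖tApplyC B x i‖ ≤ ∑ j, B i j * ‖x i‖ ^ k := by
    refine le_trans (norm_sum_le _ _) (Finset.sum_le_sum fun j _ => ?_)
    have : ‖(B i j : ℂ) * ∏ t, x (j t)‖
        = B i j * ∏ t, ‖x (j t)‖ := by
      rw [norm_mul, Complex.norm_real, Real.norm_eq_abs, abs_of_nonneg (hB i j), norm_prod]
    rw [this]
    refine mul_le_mul_of_nonneg_left ?_ (hB i j)
    calc ∏ t, ‖x (j t)‖ ≤ ∏ _t : Fin k, ‖x i‖ :=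
            Finset.prod_le_prod (fun t _ => norm_nonneg _)
              (fun t _ => hi (j t) (Finset.mem_univ _))
      _ = ‖x i‖ ^ k := by simp
  have h2 : ‖tApplyC B x i‖ = ‖lam‖ * ‖x i‖ ^ k := by
    rw [hx i, norm_mul, norm_pow]
  rw [h2] at h1
  rw [← Finset.sum_mul] at h1
  exact le_of_mul_le_mul_right h1 (pow_pos hM k)

/-- a strictly diagonally dominant tensor in `𝕫` with nonnegative diagonal is an
M-tensor; equivalently all its eigenvalues have positive real part. -/
theorem strictDiagDom_mTensor {n k : ℕ} (A : Fin n → (Fin k → Fin n) → ℝ)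
    (hZ : ZTensor A) (hdiag : ∀ i, 0 ≤ A i (fun _ => i))
    (hdd : ∀ i, offDiagSum A i < |A i (fun _ => i)|)
    (hYY : ∀ C : Fin n → (Fin k → Fin n) → ℝ, NonnegT C → HasSpecRad C) :
    IsMTensor A ∧ ∀ lam : ℂ, IsEig A lam → 0 < lam.re := by
  rcases Nat.eq_zero_or_pos n with hn | hn
  · exfalso
    subst hn
    obtain ⟨⟨x, hx0, -⟩, -⟩ := hYY (fun _ _ => 0) (fun _ _ => le_rfl)
    exact hx0 (funext fun i => i.elim0)
  set c : ℝ := 1 + ∑ i, A i (fun _ => i) with hc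
  have hsum_nonneg : (0:ℝ) ≤ ∑ i, A i (fun _ => i) :=
    Finset.sum_nonneg fun i _ => hdiag i
  have hc0 : 0 < c := by positivity
  have hcd : ∀ i, A i (fun _ => i) ≤ c - 1 := by
    intro i
    have := Finset.single_le_sum (f := fun i => A i (fun _ => i))
      (fun i _ => hdiag i) (Finset.mem_univ i)
    simp only [hc]; linarith
  set B : Fin n → (Fin k → Fin n) → ℝ := fun i j => c * idT n k i j - A i j with hBdef
  have hBnn : NonnegT B := by
    intro i j
    by_cases h : ∀ t, j t = i
    · have hj : j = fun _ => i := funext h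
      subst hj
      have h1 : idT n k i (fun _ => i) = 1 := by unfold idT; rw [if_pos h]
      simp only [hBdef, h1, mul_one]
      linarith [hcd i]
    · simp only [hBdef, idT, if_neg h, mul_zero, zero_sub, neg_nonneg]
      exact hZ i j h
  have hfilter : ∀ i : Fin n,
      Finset.univ.filter (fun j : Fin k → Fin n => ∀ t, j t = i) = {fun _ => i} := by
    intro i
    ext j
    simp [funext_iff]
  have hrow : ∀ i, ∑ j, B i j < c := by
    intro i
    have hsplit := Finset.sum_filter_add_sum_filter_not Finset.univ
      (fun j : Fin k → Fin n => ∀ t, j t = i) (fun j => B i j)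
    have hdiagpart : ∑ j ∈ Finset.univ.filter (fun j : Fin k → Fin n => ∀ t, j t = i),
        B i j = c - A i (fun _ => i) := by
      rw [hfilter i, Finset.sum_singleton]
      simp [hBdef, idT]
    have hoffpart : ∑ j ∈ Finset.univ.filter (fun j : Fin k → Fin n => ¬ ∀ t, j t = i),
        B i j = offDiagSum A i := by
      unfold offDiagSum
      refine Finset.sum_congr rfl fun j hj => ?_
      rw [Finset.mem_filter] at hj
      rw [abs_of_nonpos (hZ i j hj.2)]
      simp [hBdef, idT, if_neg hj.2]
    have hAbs : |A i (fun _ => i)| = A i (fun _ => i) := abs_of_nonneg (hdiag i)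
    have := hdd i
    rw [hAbs] at this
    calc ∑ j, B i j = c - A i (fun _ => i) + offDiagSum A i := by
          rw [← hsplit, hdiagpart, hoffpart]
      _ < c := by linarith
  obtain ⟨heig, hub⟩ := hYY B hBnn
  obtain ⟨i, hi⟩ := eig_rowBound B hBnn _ heig
  have hrad : specRad B < c := by
    have h1 : specRad B ≤ ‖(specRad B : ℂ)‖ := by
      rw [Complex.norm_real, Real.norm_eq_abs]; exact le_abs_self _
    exact lt_of_le_of_lt (h1.trans hi) (hrow i)
  have hidsum : ∀ (x : Fin n → ℂ) (i : Fin n),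
      ∑ j : Fin k → Fin n, (idT n k i j : ℂ) * ∏ t, x (j t) = x i ^ k := by
    intro x i
    have : ∀ j : Fin k → Fin n, (idT n k i j : ℂ) * ∏ t, x (j t)
        = if j = (fun _ => i) then ∏ t, x (j t) else 0 := by
      intro j
      simp only [idT, funext_iff]
      split <;> simp
    rw [Finset.sum_congr rfl fun j _ => this j, Finset.sum_ite_eq' Finset.univ]
    simp
  have hBpair : ∀ (lam : ℂ) (x : Fin n → ℂ), IsEigPair A lam x → IsEigPair B (c - lam) x := by
    intro lam x ⟨hx0, hx⟩
    refine ⟨hx0, fun i => ?_⟩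
    have : tApplyC B x i = c * x i ^ k - tApplyC A x i := by
      unfold tApplyC
      rw [← hidsum x i, Finset.mul_sum, ← Finset.sum_sub_distrib]
      refine Finset.sum_congr rfl fun j _ => ?_
      simp only [hBdef]
      push_cast
      ring
    rw [this, hx i]
    ring
  constructor
  · exact ⟨B, c, hBnn, hrad, fun i j => by simp [hBdef]⟩
  · intro lam ⟨x, hpair⟩
    have hble : ‖(c : ℂ) - lam‖ ≤ specRad B := hub _ ⟨x, hBpair lam x hpair⟩
    have hlt : ‖(c : ℂ) - lam‖ < c := lt_of_le_of_lt hble hrad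
    have hsq : (c - lam.re) ^ 2 + lam.im ^ 2 < c ^ 2 := by
      have h1 : ‖(c : ℂ) - lam‖ ^ 2 < c ^ 2 :=
        pow_lt_pow_left₀ hlt (norm_nonneg _) (by norm_num)
      rw [Complex.sq_norm, Complex.normSq_apply] at h1
      simp only [Complex.sub_re, Complex.sub_im, Complex.ofReal_re, Complex.ofReal_im,
        zero_sub] at h1
      nlinarith [h1]
    nlinarith [sq_nonneg lam.im, sq_nonneg lam.re, hc0]
end

section
/- If a tensor A with nonpositive off-diagonal entries and nonnegative diagonal entries is irreducible, diagonally dominant, and strictly diagonally dominant in at least one row, then every eigenvalue of A has positive real part (hence A is an M-tensor). -/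
open scoped BigOperators

section aux
variable {n k : ℕ}
open Finset

lemma filter_diag_eq (i : Fin n) :
    univ.filter (fun j : Fin k → Fin n => ∀ t, j t = i) = {fun _ => i} := by
  ext j; simp [funext_iff]

lemma tApplyC_split (A : Fin n → (Fin k → Fin n) → ℝ) (x : Fin n → ℂ) (i : Fin n) :
    tApplyC A x i = (A i (fun _ => i) : ℂ) * x i ^ k +
      ∑ j ∈ univ.filter (fun j : Fin k → Fin n => ¬ ∀ t, j t = i),
        (A i j : ℂ) * ∏ t, x (j t) := by
  rw [tApplyC, ← Finset.sum_filter_add_sum_filter_not univ (fun j => ∀ t, j t = i)]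
  congr 1
  rw [filter_diag_eq, Finset.sum_singleton]
  simp

end aux

/-- an irreducibly diagonally dominant tensor in `𝕫` with nonnegative diagonal has
all eigenvalues with positive real part. -/
theorem irredDiagDom_re_pos {n k : ℕ} (A : Fin n → (Fin k → Fin n) → ℝ)
    (hZ : ZTensor A) (hdiag : ∀ i, 0 ≤ A i (fun _ => i))
    (hirr : IrreducibleT A)
    (hdd : ∀ i, offDiagSum A i ≤ A i (fun _ => i))
    (hstrict : ∃ i, offDiagSum A i < A i (fun _ => i)) :
    ∀ lam : ℂ, IsEig A lam → 0 < lam.re := by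
  intro lam hlam
  obtain ⟨x, hx0, heig⟩ := hlam
  obtain ⟨i0, hi0⟩ := hstrict
  obtain ⟨p, -, hp⟩ := Finset.exists_max_image Finset.univ
    (fun i => ‖x i‖) ⟨i0, Finset.mem_univ i0⟩
  set M := ‖x p‖ with hMdef
  have hM : ∀ i, ‖x i‖ ≤ M := fun i => hp i (Finset.mem_univ i)
  have hMpos : 0 < M := by
    obtain ⟨q, hq⟩ := Function.ne_iff.mp hx0
    calc (0:ℝ) < ‖x q‖ := norm_pos_iff.mpr hq
    _ ≤ M := hM q
  have hMk : 0 < M ^ k := pow_pos hMpos k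
  have hprodle : ∀ j : Fin k → Fin n, ∏ t, ‖x (j t)‖ ≤ M ^ k := by
    intro j
    calc ∏ t, ‖x (j t)‖ ≤ ∏ _t : Fin k, M :=
          Finset.prod_le_prod (fun t _ => norm_nonneg _) (fun t _ => hM (j t))
    _ = M ^ k := by simp
  have keyEq : ∀ i, ∑ j ∈ Finset.univ.filter (fun j : Fin k → Fin n => ¬ ∀ t, j t = i),
      (A i j : ℂ) * ∏ t, x (j t) = (lam - A i (fun _ => i)) * x i ^ k := by
    intro i
    have h := heig i
    rw [tApplyC_split] at h
    linear_combination h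
  have keyLe : ∀ i, ‖lam - A i (fun _ => i)‖ * ‖x i‖ ^ k ≤
      ∑ j ∈ Finset.univ.filter (fun j : Fin k → Fin n => ¬ ∀ t, j t = i),
        |A i j| * ∏ t, ‖x (j t)‖ := by
    intro i
    have h1 : ‖lam - A i (fun _ => i)‖ * ‖x i‖ ^ k
        = ‖∑ j ∈ Finset.univ.filter (fun j : Fin k → Fin n => ¬ ∀ t, j t = i),
            (A i j : ℂ) * ∏ t, x (j t)‖ := by
      rw [keyEq i, norm_mul, norm_pow]
    rw [h1]
    refine le_trans (norm_sum_le _ _) (le_of_eq (Finset.sum_congr rfl fun j _ => ?_))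
    rw [norm_mul, Complex.norm_real, Real.norm_eq_abs]
    congr 1
    exact Complex.norm_prod _ _
  have Tle : ∀ i, (∑ j ∈ Finset.univ.filter (fun j : Fin k → Fin n => ¬ ∀ t, j t = i),
      |A i j| * ∏ t, ‖x (j t)‖) ≤ offDiagSum A i * M ^ k := by
    intro i
    rw [offDiagSum, Finset.sum_mul]
    exact Finset.sum_le_sum fun j _ => mul_le_mul_of_nonneg_left (hprodle j) (abs_nonneg _)
  -- Gershgorin at the maximal coordinate p
  have hG : ‖lam - A p (fun _ => p)‖ ≤ offDiagSum A p := by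
    have h := (keyLe p).trans (Tle p)
    rw [← hMdef] at h
    exact le_of_mul_le_mul_right h hMk
  have hGa : ‖lam - A p (fun _ => p)‖ ≤ A p (fun _ => p) := hG.trans (hdd p)
  have hre : 0 ≤ lam.re := by
    have h2 : |(lam - (A p (fun _ => p) : ℂ)).re| ≤ A p (fun _ => p) :=
      (Complex.abs_re_le_norm _).trans hGa
    rw [Complex.sub_re, Complex.ofReal_re] at h2
    have h3 := abs_le.mp h2
    linarith [h3.1]
  by_contra hc
  push_neg at hc
  have hre0 : lam.re = 0 := le_antisymm hc hre
  have hsq : (lam.re - A p (fun _ => p)) ^ 2 + lam.im ^ 2 ≤ A p (fun _ => p) ^ 2 := by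
    have h1 : ‖lam - A p (fun _ => p)‖ ^ 2 ≤ A p (fun _ => p) ^ 2 :=
      pow_le_pow_left₀ (norm_nonneg _) hGa 2
    rw [Complex.sq_norm, Complex.normSq_apply, Complex.sub_re, Complex.sub_im,
      Complex.ofReal_re, Complex.ofReal_im] at h1
    nlinarith [h1]
  have him0 : lam.im = 0 := by nlinarith [sq_nonneg lam.im, hdiag p]
  have hlam0 : lam = 0 := Complex.ext (by simp [hre0]) (by simp [him0])
  -- now λ = 0 : derive a contradiction
  have hchain : ∀ i, ‖x i‖ = M →
      A i (fun _ => i) * M ^ k ≤ ∑ j ∈ Finset.univ.filter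
        (fun j : Fin k → Fin n => ¬ ∀ t, j t = i), |A i j| * ∏ t, ‖x (j t)‖ := by
    intro i hi
    have h := keyLe i
    rw [hi, hlam0] at h
    have habs : ‖0 - (A i (fun _ => i) : ℂ)‖ = A i (fun _ => i) := by
      rw [zero_sub, norm_neg, Complex.norm_real, Real.norm_eq_abs, abs_of_nonneg (hdiag i)]
    rwa [habs] at h
  by_cases hU : {i | ‖x i‖ = M} = Set.univ
  · -- all coordinates maximal: use the strictly dominant row
    have hi0S : ‖x i0‖ = M := by
      have h : i0 ∈ {i | ‖x i‖ = M} := hU ▸ Set.mem_univ i0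
      exact h
    have h1 := (hchain i0 hi0S).trans (Tle i0)
    have h2 : A i0 (fun _ => i0) ≤ offDiagSum A i0 := le_of_mul_le_mul_right h1 hMk
    linarith
  · refine hirr ⟨{i | ‖x i‖ = M}, ⟨p, rfl⟩, hU, ?_⟩
    intro i hiS j hjnotS
    have hiS' : ‖x i‖ = M := hiS
    have hTeq : ∑ j ∈ Finset.univ.filter (fun j : Fin k → Fin n => ¬ ∀ t, j t = i),
        |A i j| * ∏ t, ‖x (j t)‖
        = ∑ j ∈ Finset.univ.filter (fun j : Fin k → Fin n => ¬ ∀ t, j t = i),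
        |A i j| * M ^ k := by
      have h1 := hchain i hiS'
      have h2 := Tle i
      have h3 : offDiagSum A i * M ^ k ≤ A i (fun _ => i) * M ^ k :=
        mul_le_mul_of_nonneg_right (hdd i) hMk.le
      have h4 : offDiagSum A i * M ^ k = ∑ j ∈ Finset.univ.filter
          (fun j : Fin k → Fin n => ¬ ∀ t, j t = i), |A i j| * M ^ k := by
        rw [offDiagSum, Finset.sum_mul]
      linarith [h4 ▸ h3, h4 ▸ h2]
    have hterm := (Finset.sum_eq_sum_iff_of_le
      (fun j _ => mul_le_mul_of_nonneg_left (hprodle j) (abs_nonneg (A i j)))).mp hTeq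
    by_cases hd : ∀ t, j t = i
    · rcases isEmpty_or_nonempty (Fin k) with hk | hk
      · -- k has no indices: every multi-index is diagonal, off-diag sum is empty
        have hfe : Finset.univ.filter (fun j : Fin k → Fin n => ¬ ∀ t, j t = i) = ∅ :=
          Finset.filter_false_of_mem fun j' _ => not_not_intro (fun t => hk.elim t)
        have h1 := hchain i hiS'
        rw [hfe, Finset.sum_empty] at h1
        have ha0 : A i (fun _ => i) = 0 := le_antisymm (by nlinarith) (hdiag i)
        have hj : j = fun _ => i := funext fun t => hd t
        rw [hj, ha0]
      · obtain t := Classical.arbitrary (Fin k)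
        exact absurd (show ‖x (j t)‖ = M by rw [hd t]; exact hiS') (hjnotS t)
    · -- j is off-diagonal: the term equality forces A i j = 0
      have hjf : j ∈ Finset.univ.filter (fun j : Fin k → Fin n => ¬ ∀ t, j t = i) :=
        Finset.mem_filter.mpr ⟨Finset.mem_univ j, hd⟩
      by_contra hA
      have ht0 : ∃ t : Fin k, True := by
        by_contra h
        push_neg at h
        exact hd fun t => (h t).elim
      obtain ⟨t0, -⟩ := ht0
      have h0 : ‖x (j t0)‖ < M := lt_of_le_of_ne (hM _) (hjnotS t0)
      have hlt : ∏ t, ‖x (j t)‖ < M ^ k := by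
        have e1 : ∏ t, ‖x (j t)‖
            = ‖x (j t0)‖ * ∏ t ∈ Finset.univ.erase t0, ‖x (j t)‖ :=
          (Finset.mul_prod_erase _ _ (Finset.mem_univ t0)).symm
        have e2 : M ^ k = M * ∏ _t ∈ Finset.univ.erase t0, M := by
          have h' : (M:ℝ) ^ k = ∏ _t : Fin k, M := by simp
          rw [h', ← Finset.mul_prod_erase Finset.univ (fun _ => M) (Finset.mem_univ t0)]
        have hP : ∏ t ∈ Finset.univ.erase t0, ‖x (j t)‖
            ≤ ∏ _t ∈ Finset.univ.erase t0, M :=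
          Finset.prod_le_prod (fun t _ => norm_nonneg _) (fun t _ => hM _)
        have hQ : (0:ℝ) < ∏ _t ∈ Finset.univ.erase t0, M := Finset.prod_pos fun _ _ => hMpos
        rw [e1, e2]
        calc ‖x (j t0)‖ * ∏ t ∈ Finset.univ.erase t0, ‖x (j t)‖
            ≤ ‖x (j t0)‖ * ∏ _t ∈ Finset.univ.erase t0, M :=
              mul_le_mul_of_nonneg_left hP (norm_nonneg _)
          _ < M * ∏ _t ∈ Finset.univ.erase t0, M := mul_lt_mul_of_pos_right h0 hQ
      have hcan := mul_left_cancel₀ (abs_ne_zero.mpr hA) (hterm j hjf)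
      linarith
end

section
/- For any m-order n-dimensional real tensor A, every real eigenvalue λ of A satisfies L_A ≤ λ ≤ U_A, where L_A = min_i (A_{i...i} - C_i), U_A = max_i (A_{i...i} + C_i), and C_i = Σ_{(i2,...,im) not all equal to i} |A_{i i2...im}|. -/
open scoped BigOperators

/-- every real eigenvalue `λ` of `A` satisfies `L_A ≤ λ ≤ U_A`. -/
theorem real_eig_bounds {n k : ℕ} (hn : 0 < n) (A : Fin n → (Fin k → Fin n) → ℝ) :
    ∀ lam : ℝ, IsEig A (lam : ℂ) →
      Finset.univ.inf' (Finset.univ_nonempty_iff.mpr (Fin.pos_iff_nonempty.mp hn))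
          (fun i => A i (fun _ => i) - offDiagSum A i) ≤ lam ∧
      lam ≤ Finset.univ.sup' (Finset.univ_nonempty_iff.mpr (Fin.pos_iff_nonempty.mp hn))
          (fun i => A i (fun _ => i) + offDiagSum A i) := by
  intro lam hl
  obtain ⟨x, hx0, heig⟩ := hl
  obtain ⟨i0, -, hmax⟩ := Finset.exists_max_image (Finset.univ : Finset (Fin n))
      (fun i => ‖x i‖) (Finset.univ_nonempty_iff.mpr (Fin.pos_iff_nonempty.mp hn))
  set M := ‖x i0‖ with hM
  have hMpos : 0 < M := by
    obtain ⟨i, hi⟩ := Function.ne_iff.mp hx0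
    have h1 : 0 < ‖x i‖ := by simpa using hi
    have h2 := hmax i (Finset.mem_univ i)
    linarith
  set d := A i0 (fun _ => i0) with hd
  have hsplit : ((lam : ℂ) - (d : ℂ)) * x i0 ^ k
      = ∑ j ∈ Finset.univ.filter (fun j : Fin k → Fin n => ¬ ∀ t, j t = i0),
          (A i0 j : ℂ) * ∏ t, x (j t) := by
    have h := heig i0
    rw [tApplyC, ← Finset.sum_filter_add_sum_filter_not Finset.univ
        (fun j : Fin k → Fin n => ∀ t, j t = i0)] at h
    have hfil : Finset.univ.filter (fun j : Fin k → Fin n => ∀ t, j t = i0)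
        = {fun _ => i0} := by
      ext j
      simp [funext_iff]
    rw [hfil, Finset.sum_singleton] at h
    have hprod : (∏ t : Fin k, x i0) = x i0 ^ k := by
      simp [Finset.prod_const]
    rw [hprod] at h
    rw [hd]
    linear_combination -h
  have hC : |lam - d| ≤ offDiagSum A i0 := by
    have h1 : ‖(((lam : ℂ) - (d : ℂ)) * x i0 ^ k)‖
        ≤ offDiagSum A i0 * M ^ k := by
      rw [hsplit]
      calc ‖(∑ j ∈ Finset.univ.filter
              (fun j : Fin k → Fin n => ¬ ∀ t, j t = i0),
              (A i0 j : ℂ) * ∏ t, x (j t))‖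
          ≤ ∑ j ∈ Finset.univ.filter (fun j : Fin k → Fin n => ¬ ∀ t, j t = i0),
              ‖((A i0 j : ℂ) * ∏ t, x (j t))‖ :=
            norm_sum_le _ _
        _ ≤ ∑ j ∈ Finset.univ.filter (fun j : Fin k → Fin n => ¬ ∀ t, j t = i0),
              |A i0 j| * M ^ k := by
            refine Finset.sum_le_sum fun j _ => ?_
            rw [norm_mul, Complex.norm_real, Real.norm_eq_abs, norm_prod]
            have hp : (∏ t : Fin k, ‖x (j t)‖) ≤ M ^ k := by
              calc (∏ t : Fin k, ‖x (j t)‖)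
                  ≤ ∏ _t : Fin k, M := by
                    refine Finset.prod_le_prod (fun t _ => norm_nonneg _)
                      (fun t _ => hmax (j t) (Finset.mem_univ _))
                _ = M ^ k := by simp [Finset.prod_const]
            exact mul_le_mul_of_nonneg_left hp (abs_nonneg _)
        _ = offDiagSum A i0 * M ^ k := by
            rw [offDiagSum, Finset.sum_mul]
    have h2 : ‖(((lam : ℂ) - (d : ℂ)) * x i0 ^ k)‖ = |lam - d| * M ^ k := by
      rw [norm_mul, norm_pow]
      congr 1
      rw [show ((lam : ℂ) - (d : ℂ)) = ((lam - d : ℝ) : ℂ) by push_cast; ring,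
        Complex.norm_real, Real.norm_eq_abs]
    rw [h2] at h1
    have hMk : 0 < M ^ k := pow_pos hMpos k
    exact le_of_mul_le_mul_right h1 hMk
  obtain ⟨hC1, hC2⟩ := abs_le.mp hC
  constructor
  · calc Finset.univ.inf' (Finset.univ_nonempty_iff.mpr (Fin.pos_iff_nonempty.mp hn))
          (fun i => A i (fun _ => i) - offDiagSum A i)
        ≤ d - offDiagSum A i0 := Finset.inf'_le _ (Finset.mem_univ i0)
      _ ≤ lam := by linarith
  · calc lam ≤ d + offDiagSum A i0 := by linarith
      _ ≤ _ := Finset.le_sup' (fun i => A i (fun _ => i) + offDiagSum A i)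
            (Finset.mem_univ i0)
end

section
/- Let A be any m-order n-dimensional real tensor and λ an eigenvalue with eigenvector x, and let k be an index with |x_k| = max_i |x_i|. Then |λ - A_{k k...k}| ≤ Σ_{(i2,...,im) not all equal to k} |A_{k i2...im}| (a Gershgorin-type bound for tensor eigenvalues). -/
open scoped BigOperators

/-- Gershgorin-type bound — if `|x_{k0}|` is maximal then
`|λ - A_{k0...k0}| ≤ C_{k0}`. -/
theorem gershgorin_tensor {n k : ℕ} (A : Fin n → (Fin k → Fin n) → ℝ) (lam : ℂ)
    (x : Fin n → ℂ) (hpair : IsEigPair A lam x) (k0 : Fin n)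
    (hmax : ∀ i, ‖x i‖ ≤ ‖x k0‖) :
    ‖lam - (A k0 (fun _ => k0) : ℝ)‖ ≤ offDiagSum A k0 := by
  obtain ⟨hx0, heq⟩ := hpair
  -- x k0 ≠ 0
  have hc : 0 < ‖x k0‖ := by
    obtain ⟨i, hi⟩ := Function.ne_iff.mp hx0
    exact lt_of_lt_of_le (by simpa using hi) (hmax i)
  set c := ‖x k0‖ with hcdef
  have hck : 0 < c ^ k := pow_pos hc k
  -- split the sum
  have hsplit := (Finset.sum_filter_add_sum_filter_not Finset.univ
    (fun j : Fin k → Fin n => ∀ t, j t = k0)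
    (fun j => (A k0 j : ℂ) * ∏ t, x (j t)))
  have hdiag : ∑ j ∈ Finset.univ.filter (fun j : Fin k → Fin n => ∀ t, j t = k0),
      (A k0 j : ℂ) * ∏ t, x (j t) = (A k0 (fun _ => k0) : ℂ) * x k0 ^ k := by
    rw [Finset.sum_eq_single (fun _ => k0)]
    · simp [Finset.prod_const]
    · intro j hj hne
      exact absurd (funext (Finset.mem_filter.mp hj).2) hne
    · intro h
      exact absurd (by simp : (fun _ => k0) ∈ Finset.univ.filter
        (fun j : Fin k → Fin n => ∀ t, j t = k0)) h
  have hkey : (lam - (A k0 (fun _ => k0) : ℂ)) * x k0 ^ k =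
      ∑ j ∈ Finset.univ.filter (fun j : Fin k → Fin n => ¬ ∀ t, j t = k0),
        (A k0 j : ℂ) * ∏ t, x (j t) := by
    have h1 := heq k0
    unfold tApplyC at h1
    rw [hdiag] at hsplit
    rw [h1] at hsplit
    linear_combination -hsplit
  have habs : ‖lam - (A k0 (fun _ => k0) : ℂ)‖ * c ^ k ≤ offDiagSum A k0 * c ^ k := by
    calc ‖lam - (A k0 (fun _ => k0) : ℂ)‖ * c ^ k
        = ‖(lam - (A k0 (fun _ => k0) : ℂ)) * x k0 ^ k‖ := by
          rw [norm_mul, norm_pow]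
      _ = ‖∑ j ∈ Finset.univ.filter (fun j : Fin k → Fin n => ¬ ∀ t, j t = k0),
            (A k0 j : ℂ) * ∏ t, x (j t)‖ := by rw [hkey]
      _ ≤ ∑ j ∈ Finset.univ.filter (fun j : Fin k → Fin n => ¬ ∀ t, j t = k0),
            ‖(A k0 j : ℂ) * ∏ t, x (j t)‖ := norm_sum_le _ _
      _ ≤ ∑ j ∈ Finset.univ.filter (fun j : Fin k → Fin n => ¬ ∀ t, j t = k0),
            |A k0 j| * c ^ k := by
          apply Finset.sum_le_sum
          intro j _
          rw [norm_mul, Complex.norm_real, Real.norm_eq_abs, norm_prod]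
          refine mul_le_mul_of_nonneg_left ?_ (abs_nonneg _)
          calc ∏ t, ‖x (j t)‖ ≤ ∏ t : Fin k, c :=
                Finset.prod_le_prod (fun t _ => norm_nonneg _)
                  (fun t _ => hmax (j t))
            _ = c ^ k := by rw [Finset.prod_const, Finset.card_univ, Fintype.card_fin]
      _ = offDiagSum A k0 * c ^ k := by rw [offDiagSum, Finset.sum_mul]
  exact le_of_mul_le_mul_right habs hck
end

section
/- For any nonnegative m-order n-dimensional tensor B and any strictly positive vector x ∈ ℝ^n, min_i (B x^{m-1})_i / x_i^{m-1} ≤ ρ(B) ≤ max_i (B x^{m-1})_i / x_i^{m-1}. -/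
open scoped BigOperators

open Filter Topology

lemma prodCmul {k : ℕ} (c : ℝ) (f : Fin k → ℝ) :
    ∏ t, (c * f t) = c ^ k * ∏ t, f t := by
  rw [Finset.prod_mul_distrib, Finset.prod_const, Finset.card_univ, Fintype.card_fin]

lemma tApplyR_nonneg {n k : ℕ} {A : Fin n → (Fin k → Fin n) → ℝ} {z : Fin n → ℝ}
    (hA : ∀ i j, 0 ≤ A i j) (hz : ∀ i, 0 ≤ z i) (i : Fin n) : 0 ≤ tApplyR A z i :=
  Finset.sum_nonneg fun j _ => mul_nonneg (hA i j) (Finset.prod_nonneg fun t _ => hz _)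

lemma tApplyR_mono {n k : ℕ} {A : Fin n → (Fin k → Fin n) → ℝ} {z w : Fin n → ℝ}
    (hA : ∀ i j, 0 ≤ A i j) (hz : ∀ i, 0 ≤ z i) (hzw : ∀ i, z i ≤ w i) (i : Fin n) :
    tApplyR A z i ≤ tApplyR A w i :=
  Finset.sum_le_sum fun j _ => mul_le_mul_of_nonneg_left
    (Finset.prod_le_prod (fun t _ => hz _) (fun t _ => hzw _)) (hA i j)

lemma tApplyR_monoT {n k : ℕ} {A B : Fin n → (Fin k → Fin n) → ℝ} {z : Fin n → ℝ}
    (hz : ∀ i, 0 ≤ z i) (hAB : ∀ i j, A i j ≤ B i j) (i : Fin n) :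
    tApplyR A z i ≤ tApplyR B z i :=
  Finset.sum_le_sum fun j _ => mul_le_mul_of_nonneg_right (hAB i j)
    (Finset.prod_nonneg fun t _ => hz _)

lemma tApplyR_smul {n k : ℕ} (A : Fin n → (Fin k → Fin n) → ℝ) (c : ℝ) (z : Fin n → ℝ) (i : Fin n) :
    tApplyR A (fun t => c * z t) i = c ^ k * tApplyR A z i := by
  unfold tApplyR
  rw [Finset.mul_sum]
  refine Finset.sum_congr rfl fun j _ => ?_
  rw [prodCmul c (fun t => z (j t))]
  ring

lemma tApplyR_continuous {n k : ℕ} (A : Fin n → (Fin k → Fin n) → ℝ) (i : Fin n) :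
    Continuous fun z : Fin n → ℝ => tApplyR A z i := by
  unfold tApplyR
  exact continuous_finset_sum _ fun j _ =>
    continuous_const.mul (continuous_finset_prod _ fun t _ => continuous_apply (j t))

lemma tApplyR_add_const {n k : ℕ} (A : Fin n → (Fin k → Fin n) → ℝ) (c : ℝ) (z : Fin n → ℝ)
    (i : Fin n) :
    tApplyR (fun i j => A i j + c) z i
      = tApplyR A z i + c * tApplyR (n := n) (k := k) (fun _ _ => (1:ℝ)) z i := by
  unfold tApplyR
  rw [Finset.mul_sum, ← Finset.sum_add_distrib]
  refine Finset.sum_congr rfl fun j _ => by ring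

lemma subinv_le_rowsum {n k : ℕ} (hne : (Finset.univ : Finset (Fin n)).Nonempty)
    {A : Fin n → (Fin k → Fin n) → ℝ} (hA : ∀ i j, 0 ≤ A i j) {lam : ℝ} {z : Fin n → ℝ}
    (hz0 : ∀ i, 0 ≤ z i) (hzne : z ≠ 0) (hsub : ∀ i, lam * z i ^ k ≤ tApplyR A z i) :
    lam ≤ Finset.univ.sup' hne (fun i => ∑ j, A i j) := by
  obtain ⟨i0, -, hmax⟩ := Finset.exists_max_image (Finset.univ : Finset (Fin n)) z hne
  obtain ⟨i1, hi1⟩ := Function.ne_iff.mp hzne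
  have hz1 : 0 < z i1 := lt_of_le_of_ne (hz0 i1) (Ne.symm hi1)
  have hzi0 : 0 < z i0 := lt_of_lt_of_le hz1 (hmax i1 (Finset.mem_univ _))
  have h1 : tApplyR A z i0 ≤ (∑ j, A i0 j) * z i0 ^ k := by
    rw [Finset.sum_mul]
    refine Finset.sum_le_sum fun j _ => mul_le_mul_of_nonneg_left ?_ (hA i0 j)
    calc ∏ t, z (j t) ≤ ∏ _t : Fin k, z i0 :=
          Finset.prod_le_prod (fun t _ => hz0 _) (fun t _ => hmax _ (Finset.mem_univ _))
      _ = z i0 ^ k := by rw [Finset.prod_const, Finset.card_univ, Fintype.card_fin]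
  have h2 : lam * z i0 ^ k ≤ (∑ j, A i0 j) * z i0 ^ k := (hsub i0).trans h1
  have h3 : lam ≤ ∑ j, A i0 j := le_of_mul_le_mul_right h2 (pow_pos hzi0 k)
  exact h3.trans (Finset.le_sup' (fun i => ∑ j, A i j) (Finset.mem_univ i0))

lemma modSet_le {n k : ℕ} (hne : (Finset.univ : Finset (Fin n)).Nonempty)
    (B : Fin n → (Fin k → Fin n) → ℝ) (hB : NonnegT B) (x : Fin n → ℝ) (hx : ∀ i, 0 < x i) :
    ∀ r ∈ modSet B, r ≤ Finset.univ.sup' hne (fun i => tApplyR B x i / x i ^ k) := by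
  rintro r ⟨lam, ⟨u, hune, heig⟩, rfl⟩
  set M := Finset.univ.sup' hne (fun i => tApplyR B x i / x i ^ k) with hM
  set c := Finset.univ.sup' hne (fun i => ‖u i‖ / x i) with hc
  obtain ⟨i0, -, hi0⟩ := Finset.exists_mem_eq_sup' hne (fun i => ‖u i‖ / x i)
  obtain ⟨i1, hi1⟩ := Function.ne_iff.mp hune
  have hcpos : 0 < c := by
    have h1 : 0 < ‖u i1‖ / x i1 :=
      div_pos (norm_pos_iff.mpr hi1) (hx i1)
    exact lt_of_lt_of_le h1 (Finset.le_sup' (fun i => ‖u i‖ / x i) (Finset.mem_univ i1))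
  have hcu : ∀ i, ‖u i‖ ≤ c * x i := by
    intro i
    have := Finset.le_sup' (f := fun i => ‖u i‖ / x i) (Finset.mem_univ i)
    rw [← hc] at this
    exact (div_le_iff₀ (hx i)).mp this
  rw [← hc] at hi0
  have hui0 : ‖u i0‖ = c * x i0 := by
    rw [hi0, div_mul_cancel₀ _ (hx i0).ne']
  have key : ‖lam‖ * (c * x i0) ^ k ≤ M * (c * x i0) ^ k := by
    have h1 : ‖lam‖ * (c * x i0) ^ k = ‖tApplyC B u i0‖ := by
      rw [heig i0, norm_mul, norm_pow, hui0]
    have h2 : ‖tApplyC B u i0‖ ≤ ∑ j : Fin k → Fin n,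
        B i0 j * ∏ t, ‖u (j t)‖ := by
      refine (norm_sum_le _ _).trans (Finset.sum_le_sum fun j _ => ?_)
      rw [norm_mul, norm_prod]
      apply mul_le_mul_of_nonneg_right _ (Finset.prod_nonneg fun t _ => norm_nonneg _)
      rw [Complex.norm_real, Real.norm_eq_abs, abs_of_nonneg (hB i0 j)]
    have h3 : ∑ j : Fin k → Fin n, B i0 j * ∏ t, ‖u (j t)‖
        ≤ c ^ k * tApplyR B x i0 := by
      rw [tApplyR, Finset.mul_sum]
      refine Finset.sum_le_sum fun j _ => ?_
      have := Finset.prod_le_prod (s := Finset.univ) (f := fun t => ‖u (j t)‖)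
        (g := fun t => c * x (j t)) (fun t _ => norm_nonneg _) (fun t _ => hcu _)
      calc B i0 j * ∏ t, ‖u (j t)‖ ≤ B i0 j * ∏ t, (c * x (j t)) :=
            mul_le_mul_of_nonneg_left this (hB i0 j)
        _ = c ^ k * (B i0 j * ∏ t, x (j t)) := by rw [prodCmul]; ring
    have h4 : tApplyR B x i0 ≤ M * x i0 ^ k := by
      have := Finset.le_sup' (f := fun i => tApplyR B x i / x i ^ k) (Finset.mem_univ i0)
      rw [← hM] at this
      exact (div_le_iff₀ (pow_pos (hx i0) k)).mp this
    calc ‖lam‖ * (c * x i0) ^ k = ‖tApplyC B u i0‖ := h1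
      _ ≤ ∑ j : Fin k → Fin n, B i0 j * ∏ t, ‖u (j t)‖ := h2
      _ ≤ c ^ k * tApplyR B x i0 := h3
      _ ≤ c ^ k * (M * x i0 ^ k) := mul_le_mul_of_nonneg_left h4 (pow_nonneg hcpos.le k)
      _ = M * (c * x i0) ^ k := by rw [mul_pow]; ring
  exact le_of_mul_le_mul_right key (pow_pos (mul_pos hcpos (hx i0)) k)

lemma pos_existence {n k : ℕ} (hne : (Finset.univ : Finset (Fin n)).Nonempty) (hk : k ≠ 0)
    (A : Fin n → (Fin k → Fin n) → ℝ) (hA : ∀ i j, 0 < A i j) (lam0 : ℝ) (x0 : Fin n → ℝ)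
    (hx00 : ∀ i, 0 ≤ x0 i) (hx0ne : x0 ≠ 0) (hw : ∀ i, lam0 * x0 i ^ k ≤ tApplyR A x0 i) :
    ∃ (lam : ℝ) (z : Fin n → ℝ), lam0 ≤ lam ∧ (∀ i, 0 ≤ z i) ∧ ‖z‖ = 1 ∧
      ∀ i, tApplyR A z i = lam * z i ^ k := by
  have hA0 : ∀ i j, 0 ≤ A i j := fun i j => (hA i j).le
  set S : Set ℝ := {lam | ∃ z : Fin n → ℝ, (∀ i, 0 ≤ z i) ∧ ‖z‖ = 1 ∧
    ∀ i, lam * z i ^ k ≤ tApplyR A z i} with hS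
  have hnorm : ∀ (lam : ℝ) (z : Fin n → ℝ), (∀ i, 0 ≤ z i) → z ≠ 0 →
      (∀ i, lam * z i ^ k ≤ tApplyR A z i) → lam ∈ S := by
    intro lam z hz0 hzne hle
    have hzn : 0 < ‖z‖ := norm_pos_iff.mpr hzne
    set c : ℝ := ‖z‖⁻¹ with hcdef
    have hc : 0 < c := inv_pos.mpr hzn
    refine ⟨fun t => c * z t, fun i => mul_nonneg hc.le (hz0 i), ?_, ?_⟩
    · have : (fun t => c * z t) = c • z := funext fun t => rfl
      rw [this, norm_smul, Real.norm_eq_abs, abs_of_pos hc, hcdef,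
        inv_mul_cancel₀ hzn.ne']
    · intro i
      rw [tApplyR_smul]
      calc lam * (c * z i) ^ k = c ^ k * (lam * z i ^ k) := by rw [mul_pow]; ring
        _ ≤ c ^ k * tApplyR A z i :=
          mul_le_mul_of_nonneg_left (hle i) (pow_nonneg hc.le k)
  have hS0 : lam0 ∈ S := hnorm lam0 x0 hx00 hx0ne hw
  have hSne : S.Nonempty := ⟨lam0, hS0⟩
  have hbdd : BddAbove S := by
    refine ⟨Finset.univ.sup' hne (fun i => ∑ j, A i j), ?_⟩
    rintro lam ⟨z, hz0, hz1, hle⟩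
    exact subinv_le_rowsum hne hA0 hz0 (norm_pos_iff.mp (by rw [hz1]; norm_num)) hle
  set r := sSup S with hr
  have hr0 : lam0 ≤ r := le_csSup hbdd hS0
  have hle_r : ∀ lam ∈ S, lam ≤ r := fun lam h => le_csSup hbdd h
  have hseq : ∀ j : ℕ, ∃ lam ∈ S, r - 1 / (j + 1) < lam := by
    intro j
    refine exists_lt_of_lt_csSup hSne ?_
    have : (0:ℝ) < 1 / (j + 1) := by positivity
    linarith
  choose lamseq hlamS hlamgt using hseq
  choose zseq hzs0 hzs1 hzsle using hlamS
  have hclosed : IsClosed {z : Fin n → ℝ | ∀ i, 0 ≤ z i} := by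
    have : {z : Fin n → ℝ | ∀ i, 0 ≤ z i} = ⋂ i, {z : Fin n → ℝ | 0 ≤ z i} := by
      ext z; simp [Set.mem_iInter]
    rw [this]
    exact isClosed_iInter fun i => isClosed_le continuous_const (continuous_apply i)
  have hK : IsCompact (Metric.sphere (0 : Fin n → ℝ) 1 ∩ {z | ∀ i, 0 ≤ z i}) :=
    (isCompact_sphere 0 1).inter_right hclosed
  have hmem : ∀ j, zseq j ∈ Metric.sphere (0 : Fin n → ℝ) 1 ∩ {z | ∀ i, 0 ≤ z i} :=
    fun j => ⟨mem_sphere_zero_iff_norm.mpr (hzs1 j), hzs0 j⟩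
  obtain ⟨zs, hzsK, φ, hφ, hconv⟩ := hK.tendsto_subseq hmem
  have hzsnorm : ‖zs‖ = 1 := mem_sphere_zero_iff_norm.mp hzsK.1
  have hzs0' : ∀ i, 0 ≤ zs i := hzsK.2
  have hzsne : zs ≠ 0 := norm_pos_iff.mp (by rw [hzsnorm]; norm_num)
  have hlamto : Tendsto (fun j => lamseq (φ j)) atTop (𝓝 r) := by
    have h1 : Tendsto (fun j : ℕ => r - 1 / ((φ j : ℝ) + 1)) atTop (𝓝 r) := by
      have h2 : Tendsto (fun j : ℕ => 1 / ((j : ℝ) + 1)) atTop (𝓝 0) :=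
        tendsto_one_div_add_atTop_nhds_zero_nat
      have h3 := (h2.comp hφ.tendsto_atTop).const_sub r
      simpa using h3
    refine tendsto_of_tendsto_of_tendsto_of_le_of_le h1 tendsto_const_nhds
      (fun j => (hlamgt (φ j)).le) (fun j => hle_r _ ⟨zseq (φ j), hzs0 _, hzs1 _, hzsle _⟩)
  have hzto : ∀ i, Tendsto (fun j => zseq (φ j) i) atTop (𝓝 (zs i)) :=
    fun i => (tendsto_pi_nhds.mp hconv) i
  have hsub : ∀ i, r * zs i ^ k ≤ tApplyR A zs i := by
    intro i
    refine le_of_tendsto_of_tendsto' (hlamto.mul ((hzto i).pow k))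
      (((tApplyR_continuous A i).continuousAt).tendsto.comp hconv) (fun j => hzsle (φ j) i)
  -- equality by perturbation
  have heq : ∀ i, tApplyR A zs i = r * zs i ^ k := by
    by_contra hcon
    push_neg at hcon
    obtain ⟨i0, hne0⟩ := hcon
    have hgap : r * zs i0 ^ k < tApplyR A zs i0 := (hsub i0).lt_of_ne (Ne.symm hne0)
    have hcont : Tendsto (fun e : ℝ => r * (zs i0 + e) ^ k) (𝓝 0)
        (𝓝 (r * zs i0 ^ k)) := by
      have hc2 : Continuous fun e : ℝ => r * (zs i0 + e) ^ k :=
        continuous_const.mul ((continuous_const.add continuous_id).pow k)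
      have h := hc2.tendsto 0
      simpa using h
    have hev : ∀ᶠ e in 𝓝 (0:ℝ), r * (zs i0 + e) ^ k < tApplyR A zs i0 :=
      hcont.eventually_lt_const hgap
    obtain ⟨δ, hδ, hball⟩ := Metric.eventually_nhds_iff.mp hev
    set ε : ℝ := δ / 2 with hεdef
    have hε : 0 < ε := by positivity
    have hεδ : dist ε (0:ℝ) < δ := by
      rw [Real.dist_eq, sub_zero, abs_of_pos hε]
      linarith
    have hkey : r * (zs i0 + ε) ^ k < tApplyR A zs i0 := hball hεδ
    set z' : Fin n → ℝ := fun i => zs i + if i = i0 then ε else 0 with hz'def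
    have hite : ∀ i : Fin n, (0:ℝ) ≤ if i = i0 then ε else 0 := by
      intro i; split_ifs
      · exact hε.le
      · exact le_rfl
    have hz'0 : ∀ i, 0 ≤ z' i := fun i => add_nonneg (hzs0' i) (hite i)
    have hz'ge : ∀ i, zs i ≤ z' i := fun i => le_add_of_nonneg_right (hite i)
    have hz'i0 : z' i0 = zs i0 + ε := by simp [hz'def]
    have hz'i0pos : 0 < z' i0 := by rw [hz'i0]; have := hzs0' i0; linarith
    have hz'ne : z' ≠ 0 := Function.ne_iff.mpr ⟨i0, hz'i0pos.ne'⟩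
    have hup : ∀ i, tApplyR A zs i + A i (fun _ => i0) * ε ^ k ≤ tApplyR A z' i := by
      intro i
      have hterm : ∀ j : Fin k → Fin n,
          A i j * ∏ t, zs (j t) + (if j = (fun _ => i0) then A i j * ε ^ k else 0)
            ≤ A i j * ∏ t, z' (j t) := by
        intro j
        by_cases hj : j = fun _ => i0
        · subst hj
          have h1 : ∏ t : Fin k, zs i0 = zs i0 ^ k := by
            rw [Finset.prod_const, Finset.card_univ, Fintype.card_fin]
          have h2 : ∏ t : Fin k, z' i0 = (zs i0 + ε) ^ k := by
            rw [Finset.prod_const, Finset.card_univ, Fintype.card_fin, hz'i0]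
          rw [if_pos rfl, h1, h2, ← mul_add]
          exact mul_le_mul_of_nonneg_left (pow_add_pow_le (hzs0' i0) hε.le hk)
            (hA _ _).le
        · rw [if_neg hj, add_zero]
          exact mul_le_mul_of_nonneg_left
            (Finset.prod_le_prod (fun t _ => hzs0' _) (fun t _ => hz'ge _)) (hA _ _).le
      calc tApplyR A zs i + A i (fun _ => i0) * ε ^ k
          = ∑ j : Fin k → Fin n, (A i j * ∏ t, zs (j t)
              + (if j = (fun _ => i0) then A i j * ε ^ k else 0)) := by
            rw [Finset.sum_add_distrib, Finset.sum_ite_eq' Finset.univ]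
            simp [tApplyR]
        _ ≤ ∑ j : Fin k → Fin n, A i j * ∏ t, z' (j t) := Finset.sum_le_sum fun j _ => hterm j
        _ = tApplyR A z' i := rfl
    have hstrict : ∀ i, z' i ≠ 0 → r * z' i ^ k < tApplyR A z' i := by
      intro i hzi
      by_cases hi : i = i0
      · rw [hi]
        calc r * z' i0 ^ k = r * (zs i0 + ε) ^ k := by rw [hz'i0]
          _ < tApplyR A zs i0 := hkey
          _ ≤ tApplyR A z' i0 := tApplyR_mono hA0 hzs0' hz'ge i0
      · have hzi' : z' i = zs i := by simp [hz'def, hi]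
        have hpos : 0 < A i (fun _ => i0) * ε ^ k :=
          mul_pos (hA _ _) (pow_pos hε k)
        calc r * z' i ^ k = r * zs i ^ k := by rw [hzi']
          _ ≤ tApplyR A zs i := hsub i
          _ < tApplyR A zs i + A i (fun _ => i0) * ε ^ k := by linarith
          _ ≤ tApplyR A z' i := hup i
    set P := Finset.univ.filter (fun i => z' i ≠ 0) with hPdef
    have hPne : P.Nonempty := ⟨i0, by simp [hPdef, hz'i0pos.ne']⟩
    set lam' := P.inf' hPne (fun i => tApplyR A z' i / z' i ^ k) with hlam'def
    have hz'pos : ∀ i ∈ P, 0 < z' i := by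
      intro i hi
      rw [hPdef, Finset.mem_filter] at hi
      exact lt_of_le_of_ne (hz'0 i) (Ne.symm hi.2)
    have hlam'r : r < lam' := by
      rw [hlam'def, Finset.lt_inf'_iff]
      intro i hi
      have hp := pow_pos (hz'pos i hi) k
      rw [lt_div_iff₀ hp]
      have hzi : z' i ≠ 0 := (hz'pos i hi).ne'
      exact hstrict i hzi
    have hlam'S : lam' ∈ S := by
      refine hnorm lam' z' hz'0 hz'ne ?_
      intro i
      by_cases hzi : z' i = 0
      · rw [hzi, zero_pow hk, mul_zero]
        exact tApplyR_nonneg hA0 hz'0 i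
      · have hiP : i ∈ P := by simp [hPdef, hzi]
        have := Finset.inf'_le (f := fun i => tApplyR A z' i / z' i ^ k) hiP
        rw [← hlam'def] at this
        exact (le_div_iff₀ (pow_pos (hz'pos i hiP) k)).mp this
    exact absurd (hle_r lam' hlam'S) (not_le.mpr hlam'r)
  exact ⟨r, zs, hr0, hzs0', hzsnorm, heq⟩

lemma lower_eig {n k : ℕ} (hne : (Finset.univ : Finset (Fin n)).Nonempty) (hk : k ≠ 0)
    (B : Fin n → (Fin k → Fin n) → ℝ) (hB : NonnegT B) (m : ℝ) (hm : 0 ≤ m)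
    (x : Fin n → ℝ) (hx : ∀ i, 0 < x i) (hwit : ∀ i, m * x i ^ k ≤ tApplyR B x i) :
    ∃ lam : ℝ, m ≤ lam ∧ IsEig B ((lam : ℝ) : ℂ) := by
  set δ : ℕ → ℝ := fun j => 1 / (j + 1) with hδdef
  have hδpos : ∀ j, 0 < δ j := fun j => by positivity
  have hδle : ∀ j, δ j ≤ 1 := by
    intro j
    rw [hδdef]
    rw [div_le_one (by positivity)]
    have : (0:ℝ) ≤ (j:ℝ) := Nat.cast_nonneg j
    linarith
  set A : ℕ → Fin n → (Fin k → Fin n) → ℝ := fun j i jj => B i jj + δ j with hAdef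
  have hApos : ∀ j i jj, 0 < A j i jj := fun j i jj =>
    add_pos_of_nonneg_of_pos (hB i jj) (hδpos j)
  have hwitA : ∀ j i, m * x i ^ k ≤ tApplyR (A j) x i := fun j i =>
    (hwit i).trans (tApplyR_monoT (fun i => (hx i).le) (fun i jj => le_add_of_nonneg_right (hδpos j).le) i)
  have hex : ∀ j : ℕ, ∃ (lam : ℝ) (z : Fin n → ℝ), m ≤ lam ∧ (∀ i, 0 ≤ z i) ∧ ‖z‖ = 1 ∧
      ∀ i, tApplyR (A j) z i = lam * z i ^ k := by
    intro j
    exact pos_existence hne hk (A j) (hApos j) m x (fun i => (hx i).le)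
      (fun h => absurd (congrFun h ⟨0, Fin.pos hne.choose⟩) (hx _).ne') (hwitA j)
  choose lam z hlamm hz0 hz1 heig using hex
  -- upper bound on lam j
  set N : ℝ := (Fintype.card (Fin k → Fin n) : ℝ) with hNdef
  have hN0 : 0 ≤ N := Nat.cast_nonneg _
  set C : ℝ := Finset.univ.sup' hne (fun i => ∑ jj, B i jj) + N with hCdef
  have hlamC : ∀ j, lam j ∈ Set.Icc m C := by
    intro j
    refine ⟨hlamm j, ?_⟩
    have h1 : lam j ≤ Finset.univ.sup' hne (fun i => ∑ jj, A j i jj) := by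
      refine subinv_le_rowsum hne (fun i jj => (hApos j i jj).le) (hz0 j)
        (norm_pos_iff.mp (by rw [hz1 j]; norm_num)) (fun i => (heig j i).ge)
    refine h1.trans ?_
    rw [hCdef]
    refine Finset.sup'_le _ _ fun i _ => ?_
    have h2 : ∑ jj, A j i jj = (∑ jj, B i jj) + N * δ j := by
      rw [hAdef]
      rw [Finset.sum_add_distrib, Finset.sum_const, Finset.card_univ, hNdef,
        nsmul_eq_mul]
    rw [h2]
    have h3 : (∑ jj, B i jj) ≤ Finset.univ.sup' hne (fun i => ∑ jj, B i jj) :=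
      Finset.le_sup' (fun i => ∑ jj, B i jj) (Finset.mem_univ i)
    have h4 : N * δ j ≤ N * 1 := mul_le_mul_of_nonneg_left (hδle j) hN0
    linarith
  -- compactness of pairs
  have hclosed : IsClosed {z : Fin n → ℝ | ∀ i, 0 ≤ z i} := by
    have : {z : Fin n → ℝ | ∀ i, 0 ≤ z i} = ⋂ i, {z : Fin n → ℝ | 0 ≤ z i} := by
      ext z; simp [Set.mem_iInter]
    rw [this]
    exact isClosed_iInter fun i => isClosed_le continuous_const (continuous_apply i)
  have hK : IsCompact ((Set.Icc m C) ×ˢ (Metric.sphere (0 : Fin n → ℝ) 1 ∩ {z | ∀ i, 0 ≤ z i})) :=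
    isCompact_Icc.prod ((isCompact_sphere 0 1).inter_right hclosed)
  have hmem : ∀ j, (lam j, z j) ∈ (Set.Icc m C) ×ˢ (Metric.sphere (0 : Fin n → ℝ) 1 ∩ {z | ∀ i, 0 ≤ z i}) :=
    fun j => ⟨hlamC j, mem_sphere_zero_iff_norm.mpr (hz1 j), hz0 j⟩
  obtain ⟨⟨lam', y⟩, hmemK, φ, hφ, hconv⟩ := hK.tendsto_subseq hmem
  have hlam'conv : Tendsto (fun j => lam (φ j)) atTop (𝓝 lam') :=
    (continuous_fst.tendsto _).comp hconv
  have hyconv : Tendsto (fun j => z (φ j)) atTop (𝓝 y) :=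
    (continuous_snd.tendsto _).comp hconv
  have hym : m ≤ lam' := hmemK.1.1
  have hy1 : ‖y‖ = 1 := mem_sphere_zero_iff_norm.mp hmemK.2.1
  have hy0 : ∀ i, 0 ≤ y i := hmemK.2.2
  have hyne : y ≠ 0 := norm_pos_iff.mp (by rw [hy1]; norm_num)
  have hδconv : Tendsto (fun j => δ (φ j)) atTop (𝓝 0) := by
    have h2 : Tendsto (fun j : ℕ => 1 / ((j : ℝ) + 1)) atTop (𝓝 0) :=
      tendsto_one_div_add_atTop_nhds_zero_nat
    exact h2.comp hφ.tendsto_atTop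
  have heigy : ∀ i, tApplyR B y i = lam' * y i ^ k := by
    intro i
    have hzi : Tendsto (fun j => z (φ j) i) atTop (𝓝 (y i)) := (tendsto_pi_nhds.mp hyconv) i
    have hT1 : Tendsto (fun j => tApplyR (A (φ j)) (z (φ j)) i) atTop
        (𝓝 (tApplyR B y i)) := by
      have hfeq : ∀ j, tApplyR (A (φ j)) (z (φ j)) i
          = tApplyR B (z (φ j)) i + δ (φ j) * tApplyR (n := n) (k := k) (fun _ _ => (1:ℝ)) (z (φ j)) i :=
        fun j => tApplyR_add_const B (δ (φ j)) (z (φ j)) i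
      have hTB : Tendsto (fun j => tApplyR B (z (φ j)) i) atTop (𝓝 (tApplyR B y i)) :=
        ((tApplyR_continuous B i).continuousAt).tendsto.comp hyconv
      have hTone : Tendsto (fun j => tApplyR (n := n) (k := k) (fun _ _ => (1:ℝ)) (z (φ j)) i) atTop
          (𝓝 (tApplyR (n := n) (k := k) (fun _ _ => (1:ℝ)) y i)) :=
        ((tApplyR_continuous _ i).continuousAt).tendsto.comp hyconv
      have := hTB.add (hδconv.mul hTone)
      rw [zero_mul, add_zero] at this
      exact this.congr (fun j => (hfeq j).symm)
    have hT2 : Tendsto (fun j => tApplyR (A (φ j)) (z (φ j)) i) atTop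
        (𝓝 (lam' * y i ^ k)) := by
      have := hlam'conv.mul (hzi.pow k)
      exact this.congr (fun j => (heig (φ j) i).symm)
    exact tendsto_nhds_unique hT1 hT2
  refine ⟨lam', hym, ⟨fun i => (y i : ℂ), ?_, ?_⟩⟩
  · obtain ⟨i1, hi1⟩ := Function.ne_iff.mp hyne
    exact Function.ne_iff.mpr ⟨i1, by
      simpa using Complex.ofReal_ne_zero.mpr hi1⟩
  · intro i
    have : tApplyC B (fun i => (y i : ℂ)) i = ((tApplyR B y i : ℝ) : ℂ) := by
      rw [tApplyC, tApplyR]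
      push_cast
      rfl
    rw [this, heigy i]
    push_cast
    ring

/-- Collatz–Wielandt bounds — for a nonnegative tensor `B` and `x > 0`,
`min_i (B x^{m-1})_i / x_i^{m-1} ≤ ρ(B) ≤ max_i (B x^{m-1})_i / x_i^{m-1}`. -/
theorem collatz_wielandt {n k : ℕ} (hn : 0 < n) (B : Fin n → (Fin k → Fin n) → ℝ)
    (hB : NonnegT B) (x : Fin n → ℝ) (hx : ∀ i, 0 < x i)
    (hYY : ∃ y : Fin n → ℝ, y ≠ 0 ∧ (∀ i, 0 ≤ y i) ∧
      IsEigPair B ((specRad B : ℝ) : ℂ) (fun i => (y i : ℂ))) :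
    Finset.univ.inf' (Finset.univ_nonempty_iff.mpr (Fin.pos_iff_nonempty.mp hn))
        (fun i => tApplyR B x i / x i ^ k) ≤ specRad B ∧
    specRad B ≤ Finset.univ.sup' (Finset.univ_nonempty_iff.mpr (Fin.pos_iff_nonempty.mp hn))
        (fun i => tApplyR B x i / x i ^ k) := by
  have hne : (Finset.univ : Finset (Fin n)).Nonempty :=
    Finset.univ_nonempty_iff.mpr (Fin.pos_iff_nonempty.mp hn)
  have hratio0 : ∀ i, 0 ≤ tApplyR B x i / x i ^ k := fun i =>
    div_nonneg (tApplyR_nonneg hB (fun i => (hx i).le) i) (pow_nonneg (hx i).le k)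
  constructor
  · -- lower bound
    rcases Nat.eq_zero_or_pos k with hk | hk
    · -- degenerate case k = 0 : all ratios equal specRad B
      subst hk
      obtain ⟨y, hyne, hy0, hyeig⟩ := hYY
      have key : ∀ i, tApplyR B x i = specRad B := by
        intro i
        have h := hyeig.2 i
        simp only [pow_zero, mul_one] at h
        have h2 : tApplyC B (fun i => (y i : ℂ)) i
            = ((∑ j : Fin 0 → Fin n, B i j : ℝ) : ℂ) := by
          rw [tApplyC]
          push_cast
          simp
        have h3 : tApplyR B x i = ∑ j : Fin 0 → Fin n, B i j := by
          rw [tApplyR]; simp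
        rw [h2] at h
        rw [h3]
        exact_mod_cast h
      calc Finset.univ.inf' (Finset.univ_nonempty_iff.mpr (Fin.pos_iff_nonempty.mp hn))
            (fun i => tApplyR B x i / x i ^ 0)
          ≤ tApplyR B x ⟨0, hn⟩ / x ⟨0, hn⟩ ^ 0 :=
            Finset.inf'_le _ (Finset.mem_univ _)
        _ = specRad B := by rw [pow_zero, div_one, key]
    · -- main case k ≥ 1
      set m := Finset.univ.inf' (Finset.univ_nonempty_iff.mpr (Fin.pos_iff_nonempty.mp hn))
        (fun i => tApplyR B x i / x i ^ k) with hmdef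
      have hmle : ∀ i, m ≤ tApplyR B x i / x i ^ k := fun i =>
        Finset.inf'_le _ (Finset.mem_univ i)
      have hwit : ∀ i, m * x i ^ k ≤ tApplyR B x i := fun i =>
        (le_div_iff₀ (pow_pos (hx i) k)).mp (hmle i)
      have hm0 : 0 ≤ m := Finset.le_inf' _ _ (fun i _ => hratio0 i)
      obtain ⟨lam, hmlam, hEig⟩ := lower_eig hne hk.ne' B hB m hm0 x hx hwit
      have hmm : lam ∈ modSet B :=
        ⟨(lam : ℂ), hEig, by rw [Complex.norm_real, Real.norm_eq_abs, abs_of_nonneg (hm0.trans hmlam)]⟩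
      have hbdd : BddAbove (modSet B) :=
        ⟨_, fun r hr => modSet_le hne B hB x hx r hr⟩
      exact hmlam.trans (le_csSup hbdd hmm)
  · -- upper bound
    have hM0 : 0 ≤ Finset.univ.sup' (Finset.univ_nonempty_iff.mpr (Fin.pos_iff_nonempty.mp hn))
        (fun i => tApplyR B x i / x i ^ k) :=
      le_trans (hratio0 ⟨0, hn⟩)
        (Finset.le_sup' (f := fun i => tApplyR B x i / x i ^ k) (Finset.mem_univ ⟨0, hn⟩))
    exact Real.sSup_le (fun r hr => modSet_le hne B hB x hx r hr) hM0
end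

section
/- If A is a tensor with nonpositive off-diagonal entries and there exists a vector x ∈ ℝ^n with x > 0 (strictly positive) such that A x^{m-1} > 0 componentwise, then A is an M-tensor. -/
open scoped BigOperators

/-- if `A ∈ 𝕫` and there is `x > 0` with `A x^{m-1} > 0` componentwise,
then `A` is an M-tensor. -/
theorem pos_image_mTensor {n k : ℕ} (A : Fin n → (Fin k → Fin n) → ℝ) (hZ : ZTensor A)
    (x : Fin n → ℝ) (hx : ∀ i, 0 < x i) (hAx : ∀ i, 0 < tApplyR A x i) :
    IsMTensor A := by
  set c : ℝ := 1 + ∑ i, |A i (fun _ => i)| with hcdef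
  have hc1 : (1 : ℝ) ≤ c := by
    have : 0 ≤ ∑ i, |A i (fun _ => i)| :=
      Finset.sum_nonneg fun i _ => abs_nonneg _
    linarith
  set B : Fin n → (Fin k → Fin n) → ℝ := fun i j => c * idT n k i j - A i j with hBdef
  have hBnn : NonnegT B := by
    intro i j
    by_cases h : ∀ t, j t = i
    · have hj : j = fun _ => i := funext h
      have h1 : |A i (fun _ => i)| ≤ ∑ i', |A i' (fun _ => i')| :=
        Finset.single_le_sum (f := fun i' => |A i' (fun _ => i')|)
          (fun i' _ => abs_nonneg _) (Finset.mem_univ i)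
      have h2 : A i j ≤ |A i (fun _ => i)| := by rw [hj]; exact le_abs_self _
      simp only [hBdef, idT, if_pos h, mul_one]
      linarith
    · have := hZ i j h
      simp only [hBdef, idT, if_neg h, mul_zero]
      linarith
  have hid : ∀ i, (∑ j : Fin k → Fin n, idT n k i j * ∏ t, x (j t)) = x i ^ k := by
    intro i
    rw [Finset.sum_eq_single (fun _ => i : Fin k → Fin n)]
    · simp [idT, Finset.prod_const]
    · intro j _ hj
      have h : ¬ ∀ t, j t = i := fun h => hj (funext h)
      simp [idT, h]
    · intro h; exact absurd (Finset.mem_univ _) h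
  have hBx : ∀ i, tApplyR B x i = c * x i ^ k - tApplyR A x i := by
    intro i
    simp only [hBdef, tApplyR, sub_mul, Finset.sum_sub_distrib, mul_assoc,
      ← Finset.mul_sum, hid]
  have hBxlt : ∀ i, tApplyR B x i < c * x i ^ k := by
    intro i; rw [hBx i]; linarith [hAx i]
  have hBxnn : ∀ i, 0 ≤ tApplyR B x i := by
    intro i
    apply Finset.sum_nonneg
    intro j _
    exact mul_nonneg (hBnn i j) (Finset.prod_nonneg fun t _ => (hx (j t)).le)
  refine ⟨B, c, hBnn, ?_, fun i j => by simp [hBdef]⟩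
  rcases Nat.eq_zero_or_pos n with hn | hn
  · have hempty : modSet B = ∅ := by
      rw [Set.eq_empty_iff_forall_notMem]
      rintro r ⟨lam, ⟨y, hy0, -⟩, -⟩
      exact hy0 (funext fun i => absurd i.2 (by omega))
    rw [specRad, hempty, Real.sSup_empty]
    linarith
  have : Nonempty (Fin n) := Fin.pos_iff_nonempty.mp hn
  have hne : (Finset.univ : Finset (Fin n)).Nonempty := Finset.univ_nonempty
  set R := Finset.univ.sup' hne (fun i => tApplyR B x i / x i ^ k) with hRdef
  have hRc : R < c := by
    rw [hRdef, Finset.sup'_lt_iff]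
    intro i _
    rw [div_lt_iff₀ (pow_pos (hx i) k)]
    exact hBxlt i
  have hR0 : 0 ≤ R := by
    obtain ⟨i0⟩ := Fin.pos_iff_nonempty.mp hn
    refine le_trans (div_nonneg (hBxnn i0) (pow_nonneg (hx i0).le k)) ?_
    rw [hRdef]
    exact Finset.le_sup' (fun i => tApplyR B x i / x i ^ k) (Finset.mem_univ i0)
  have hsup : specRad B ≤ R := by
    apply Real.sSup_le _ hR0
    rintro r ⟨lam, ⟨y, hy0, heig⟩, rfl⟩
    obtain ⟨p, -, hp⟩ := Finset.exists_max_image Finset.univ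
      (fun i => ‖y i‖ / x i) hne
    set t := ‖y p‖ / x p with htdef
    have hynz : ∃ i, y i ≠ 0 := by
      by_contra h
      push_neg at h
      exact hy0 (funext h)
    obtain ⟨i0, hi0⟩ := hynz
    have ht : 0 < t := by
      have h1 : 0 < ‖y i0‖ / x i0 :=
        div_pos (norm_pos_iff.mpr hi0) (hx i0)
      exact lt_of_lt_of_le h1 (hp i0 (Finset.mem_univ i0))
    have hyle : ∀ i, ‖y i‖ ≤ t * x i := by
      intro i
      have := hp i (Finset.mem_univ i)
      calc ‖y i‖ = (‖y i‖ / x i) * x i :=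
            (div_mul_cancel₀ _ (hx i).ne').symm
        _ ≤ t * x i := by
            apply mul_le_mul_of_nonneg_right this (hx i).le
    have hypx : ‖y p‖ = t * x p :=
      (div_mul_cancel₀ _ (hx p).ne').symm
    have key : ‖lam‖ * ‖y p‖ ^ k ≤ t ^ k * tApplyR B x p := by
      calc ‖lam‖ * ‖y p‖ ^ k
          = ‖lam * y p ^ k‖ := by rw [norm_mul, norm_pow]
        _ = ‖tApplyC B y p‖ := by rw [heig p]
        _ ≤ ∑ j : Fin k → Fin n, ‖(B p j : ℂ) * ∏ s, y (j s)‖ :=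
            norm_sum_le _ _
        _ = ∑ j : Fin k → Fin n, B p j * ∏ s, ‖y (j s)‖ := by
            apply Finset.sum_congr rfl
            intro j _
            rw [norm_mul, norm_prod, Complex.norm_of_nonneg (hBnn p j)]
        _ ≤ ∑ j : Fin k → Fin n, B p j * ∏ s, (t * x (j s)) := by
            apply Finset.sum_le_sum
            intro j _
            apply mul_le_mul_of_nonneg_left _ (hBnn p j)
            apply Finset.prod_le_prod (fun s _ => norm_nonneg _)
              (fun s _ => hyle (j s))
        _ = t ^ k * tApplyR B x p := by
            rw [tApplyR, Finset.mul_sum]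
            apply Finset.sum_congr rfl
            intro j _
            rw [Finset.prod_mul_distrib, Finset.prod_const, Finset.card_univ,
              Fintype.card_fin]
            ring
    have hlam : ‖lam‖ ≤ tApplyR B x p / x p ^ k := by
      rw [hypx, mul_pow] at key
      have htk : 0 < t ^ k := pow_pos ht k
      have hxk : 0 < x p ^ k := pow_pos (hx p) k
      rw [le_div_iff₀ hxk]
      nlinarith [key]
    exact le_trans hlam (Finset.le_sup' (fun i => tApplyR B x i / x i ^ k)
      (Finset.mem_univ p))
  linarith
end

section
/- If A = cI - B is an M-tensor (B nonnegative, c > ρ(B)) of even order m with A symmetric, then the associated homogeneous form f(x) = Σ_{i1,...,im} A_{i1...im} x_{i1}···x_{im} is positive definite, i.e., f(x) > 0 for all nonzero x ∈ ℝ^n. -/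
open scoped BigOperators

/-! ### Auxiliary definitions and lemmas -/

/-- The homogeneous form associated to a tensor. -/
def MTform {n k : ℕ} (B : Fin n → (Fin k → Fin n) → ℝ) (x : Fin n → ℝ) : ℝ :=
  ∑ g : Fin (k+1) → Fin n, B (g 0) (fun t => g t.succ) * ∏ t, x (g t)

lemma MT_sum_split {n k : ℕ} (F : (Fin (k+1) → Fin n) → ℝ) :
    ∑ g : Fin (k+1) → Fin n, F g = ∑ i : Fin n, ∑ j : Fin k → Fin n, F (Fin.cons i j) := by
  rw [← (Fin.consEquiv (fun _ => Fin n)).sum_comp F, Fintype.sum_prod_type]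
  rfl

lemma MT_form_eq {n k : ℕ} (B : Fin n → (Fin k → Fin n) → ℝ) (x : Fin n → ℝ) :
    MTform B x = ∑ i, x i * tApplyR B x i := by
  rw [MTform, MT_sum_split]
  refine Finset.sum_congr rfl fun i _ => ?_
  rw [tApplyR, Finset.mul_sum]
  refine Finset.sum_congr rfl fun j _ => ?_
  rw [Fin.prod_univ_succ]
  simp only [Fin.cons_succ, Fin.cons_zero]
  ring

lemma MT_tApplyR_idT {n k : ℕ} (x : Fin n → ℝ) (i : Fin n) :
    tApplyR (idT n k) x i = x i ^ k := by
  rw [tApplyR]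
  rw [Finset.sum_eq_single (fun _ => i)]
  · simp [idT, Finset.prod_const]
  · intro j _ hj
    have : ¬ ∀ t, j t = i := fun h => hj (funext h)
    simp [idT, this]
  · simp

lemma MT_prod_erase_zero {k : ℕ} {M : Type*} [CommMonoid M] (f : Fin (k+1) → M) :
    ∏ t ∈ Finset.univ.erase 0, f t = ∏ t : Fin k, f t.succ := by
  refine (Finset.prod_bij (fun (t : Fin k) _ => t.succ) ?_ ?_ ?_ ?_).symm
  · intro t _; simp [Fin.succ_ne_zero]
  · intro a _ b _ h; exact Fin.succ_injective _ h
  · intro b hb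
    rcases Fin.eq_succ_of_ne_zero (Finset.ne_of_mem_erase hb) with ⟨c, rfl⟩
    exact ⟨c, Finset.mem_univ c, rfl⟩
  · intro a _; rfl

lemma MT_prod_swap_erase {n k : ℕ} (y : Fin n → ℝ) (g : Fin (k+1) → Fin n) (t0 : Fin (k+1)) :
    ∏ t ∈ Finset.univ.erase t0, y ((g ∘ Equiv.swap 0 t0) t)
      = ∏ t ∈ Finset.univ.erase 0, y (g t) := by
  refine Finset.prod_bij (fun t _ => Equiv.swap 0 t0 t) ?_ ?_ ?_ ?_
  · intro t ht
    rw [Finset.mem_erase] at ht ⊢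
    refine ⟨fun h => ht.1 ((Equiv.swap 0 t0).injective
      (h.trans (Equiv.swap_apply_right 0 t0).symm)), Finset.mem_univ _⟩
  · intro a _ b _ h; exact (Equiv.swap 0 t0).injective h
  · intro b hb
    rw [Finset.mem_erase] at hb
    refine ⟨Equiv.swap 0 t0 b, ?_, by simp⟩
    rw [Finset.mem_erase]
    refine ⟨fun h => hb.1 ?_, Finset.mem_univ _⟩
    have := (Equiv.swap 0 t0).injective (h.trans (Equiv.swap_apply_left 0 t0).symm)
    simpa using this
  · intro a _; rfl

lemma MT_key_sym {n k : ℕ} (B : Fin n → (Fin k → Fin n) → ℝ)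
    (Bsym : ∀ (g : Fin (k + 1) → Fin n) (σ : Equiv.Perm (Fin (k + 1))),
      B ((g ∘ σ) 0) (fun t => (g ∘ σ) t.succ) = B (g 0) (fun t => g t.succ))
    (y : Fin n → ℝ) (i : Fin n) (t0 : Fin (k+1)) :
    ∑ g : Fin (k+1) → Fin n, B (g 0) (fun t => g t.succ) *
        (if g t0 = i then ∏ t ∈ Finset.univ.erase t0, y (g t) else 0)
      = tApplyR B y i := by
  have hre : ∀ F : (Fin (k+1) → Fin n) → ℝ,
      ∑ g : Fin (k+1) → Fin n, F g = ∑ g : Fin (k+1) → Fin n, F (g ∘ Equiv.swap 0 t0) := by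
    intro F
    exact (Fintype.sum_bijective (fun g => g ∘ (Equiv.swap 0 t0 : Equiv.Perm (Fin (k+1))))
      (Equiv.arrowCongr (Equiv.swap 0 t0).symm (Equiv.refl (Fin n))).bijective F
      (fun g => F (g ∘ Equiv.swap 0 t0)) (fun g => congrArg F (funext fun t => by
        simp [Function.comp, Equiv.swap_apply_self])))
  rw [hre]
  have step : ∀ g : Fin (k+1) → Fin n,
      B ((g ∘ Equiv.swap 0 t0) 0) (fun t => (g ∘ Equiv.swap 0 t0) t.succ) *
        (if (g ∘ Equiv.swap 0 t0) t0 = i then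
          ∏ t ∈ Finset.univ.erase t0, y ((g ∘ Equiv.swap 0 t0) t) else 0)
      = B (g 0) (fun t => g t.succ) *
        (if g 0 = i then ∏ t ∈ Finset.univ.erase 0, y (g t) else 0) := by
    intro g
    rw [Bsym g (Equiv.swap 0 t0), MT_prod_swap_erase]
    have : (g ∘ Equiv.swap 0 t0) t0 = g 0 := by
      simp [Function.comp, Equiv.swap_apply_right]
    rw [this]
  rw [Finset.sum_congr rfl (fun g _ => step g), MT_sum_split]
  rw [tApplyR, Finset.sum_eq_single i]
  · refine Finset.sum_congr rfl fun j _ => ?_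
    rw [Fin.cons_zero, if_pos rfl, MT_prod_erase_zero]
    simp [Fin.cons_succ, Fin.cons_zero]
  · intro a _ ha
    simp only [Fin.cons_zero, if_neg ha, mul_zero, Finset.sum_const_zero]
  · simp

lemma MT_hasDerivAt_form {n k : ℕ} (B : Fin n → (Fin k → Fin n) → ℝ)
    (Bsym : ∀ (g : Fin (k + 1) → Fin n) (σ : Equiv.Perm (Fin (k + 1))),
      B ((g ∘ σ) 0) (fun t => (g ∘ σ) t.succ) = B (g 0) (fun t => g t.succ))
    (y : Fin n → ℝ) (i : Fin n) :
    HasDerivAt (fun s : ℝ => ∑ g : Fin (k+1) → Fin n, B (g 0) (fun t => g t.succ) *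
        ∏ t, (y (g t) + s * (if g t = i then (1:ℝ) else 0)))
      ((k+1) * tApplyR B y i) 0 := by
  have hprod : ∀ g : Fin (k+1) → Fin n,
      HasDerivAt (fun s : ℝ => ∏ t, (y (g t) + s * (if g t = i then (1:ℝ) else 0)))
        (∑ t0, (∏ t ∈ Finset.univ.erase t0,
            (y (g t) + 0 * (if g t = i then (1:ℝ) else 0))) •
          (if g t0 = i then (1:ℝ) else 0)) 0 := by
    intro g
    exact HasDerivAt.fun_finsetProd (fun t _ =>
      ((hasDerivAt_mul_const (if g t = i then (1:ℝ) else 0)).const_add (y (g t))))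
  have h1 : HasDerivAt (fun s : ℝ => ∑ g : Fin (k+1) → Fin n, B (g 0) (fun t => g t.succ) *
        ∏ t, (y (g t) + s * (if g t = i then (1:ℝ) else 0)))
      (∑ g : Fin (k+1) → Fin n, B (g 0) (fun t => g t.succ) *
        ∑ t0, (∏ t ∈ Finset.univ.erase t0,
            (y (g t) + 0 * (if g t = i then (1:ℝ) else 0))) •
          (if g t0 = i then (1:ℝ) else 0)) 0 :=
    HasDerivAt.fun_sum (fun g _ => (hprod g).const_mul _)
  convert h1 using 1
  have : ∀ g : Fin (k+1) → Fin n, B (g 0) (fun t => g t.succ) *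
        ∑ t0, (∏ t ∈ Finset.univ.erase t0,
            (y (g t) + 0 * (if g t = i then (1:ℝ) else 0))) •
          (if g t0 = i then (1:ℝ) else 0)
      = ∑ t0, B (g 0) (fun t => g t.succ) *
          (if g t0 = i then ∏ t ∈ Finset.univ.erase t0, y (g t) else 0) := by
    intro g
    rw [Finset.mul_sum]
    refine Finset.sum_congr rfl fun t0 _ => ?_
    simp only [zero_mul, add_zero, smul_eq_mul, mul_ite, mul_one, mul_zero, ite_self]
  rw [Finset.sum_congr rfl (fun g _ => this g), Finset.sum_comm]
  rw [Finset.sum_congr rfl (fun t0 _ => MT_key_sym B Bsym y i t0)]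
  simp [Finset.sum_const, nsmul_eq_mul]

lemma MT_hasDerivAt_constraint {n k : ℕ} (y : Fin n → ℝ) (i : Fin n) :
    HasDerivAt (fun s : ℝ => ∑ j, (y j + s * (if j = i then (1:ℝ) else 0)) ^ (k+1))
      ((k+1) * y i ^ k) 0 := by
  have h1 : HasDerivAt (fun s : ℝ => ∑ j, (y j + s * (if j = i then (1:ℝ) else 0)) ^ (k+1))
      (∑ j, ((k+1 : ℕ) : ℝ) * (y j + 0 * (if j = i then (1:ℝ) else 0)) ^ k *
        (if j = i then (1:ℝ) else 0)) 0 :=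
    HasDerivAt.fun_sum (fun j _ =>
      ((hasDerivAt_mul_const (if j = i then (1:ℝ) else 0)).const_add (y j)).pow (k+1))
  convert h1 using 1
  simp only [zero_mul, add_zero, mul_ite, mul_one, mul_zero, ite_self]
  rw [Finset.sum_ite_eq' Finset.univ i (fun j => ((k+1:ℕ):ℝ) * (y j)^k)]
  simp only [Finset.mem_univ, if_true]
  push_cast
  ring

lemma MT_deriv_nonneg_of_min {ψ : ℝ → ℝ} {d : ℝ} (hd : HasDerivAt ψ d 0)
    (hmin : ∀ t : ℝ, 0 ≤ t → ψ 0 ≤ ψ t) : 0 ≤ d := by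
  have hs := hasDerivAt_iff_tendsto_slope.1 hd
  have hs' : Filter.Tendsto (slope ψ 0) (nhdsWithin 0 (Set.Ioi 0)) (nhds d) :=
    hs.mono_left (nhdsWithin_mono 0 fun t ht => Set.mem_compl_singleton_iff.2 (ne_of_gt ht))
  refine ge_of_tendsto hs' ?_
  filter_upwards [self_mem_nhdsWithin] with t ht
  have ht' : (0:ℝ) < t := ht
  rw [slope_def_field]
  have h2 := hmin t (le_of_lt ht')
  have h3 : 0 ≤ ψ t - ψ 0 := by linarith
  exact div_nonneg h3 (by linarith)

lemma MT_form_smul {n k : ℕ} (B : Fin n → (Fin k → Fin n) → ℝ) (a : ℝ) (z : Fin n → ℝ) :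
    MTform B (fun i => a * z i) = a^(k+1) * MTform B z := by
  rw [MTform, MTform, Finset.mul_sum]
  refine Finset.sum_congr rfl fun g _ => ?_
  rw [Finset.prod_mul_distrib, Finset.prod_const, Finset.card_univ, Fintype.card_fin]
  ring

lemma MT_form_le {n k : ℕ} (B : Fin n → (Fin k → Fin n) → ℝ) (lam : ℝ)
    (hmax : ∀ z : Fin n → ℝ, (∀ i, 0 ≤ z i) → (∑ i, z i ^ (k+1)) = 1 → MTform B z ≤ lam)
    (z : Fin n → ℝ) (hz : ∀ i, 0 ≤ z i) :
    MTform B z ≤ lam * ∑ i, z i ^ (k+1) := by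
  set s := ∑ i, z i ^ (k+1) with hs
  have hs0 : 0 ≤ s := Finset.sum_nonneg fun i _ => pow_nonneg (hz i) _
  rcases eq_or_lt_of_le hs0 with h|h
  · have hz0 : ∀ i, z i = 0 := by
      intro i
      have h1 : z i ^ (k+1) = 0 :=
        (Finset.sum_eq_zero_iff_of_nonneg (fun i _ => pow_nonneg (hz i) (k+1))).1 h.symm i
          (Finset.mem_univ i)
      exact pow_eq_zero_iff (Nat.succ_ne_zero k) |>.1 h1
    have hF : MTform B z = 0 := by
      rw [MTform]
      refine Finset.sum_eq_zero fun g _ => ?_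
      rw [Finset.prod_eq_zero (Finset.mem_univ 0) (hz0 (g 0)), mul_zero]
    rw [hF, ← h, mul_zero]
  · set r := s ^ ((1:ℝ)/(k+1)) with hr
    have hr0 : 0 < r := Real.rpow_pos_of_pos h _
    have hrm : r ^ (k+1) = s := by
      rw [hr, ← Real.rpow_natCast (s ^ ((1:ℝ)/((k:ℝ)+1))) (k+1), ← Real.rpow_mul (le_of_lt h)]
      rw [show ((1:ℝ)/((k:ℝ)+1)) * ((k+1 : ℕ) : ℝ) = 1 by push_cast; field_simp]
      exact Real.rpow_one s
    have hinv : (r⁻¹)^(k+1) = s⁻¹ := by rw [inv_pow, hrm]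
    have hcon : ∑ i, (r⁻¹ * z i) ^ (k+1) = 1 := by
      have : ∀ i, (r⁻¹ * z i) ^ (k+1) = (r⁻¹)^(k+1) * z i ^ (k+1) := fun i => mul_pow _ _ _
      rw [Finset.sum_congr rfl fun i _ => this i, ← Finset.mul_sum, hinv, ← hs,
        inv_mul_cancel₀ (ne_of_gt h)]
    have hkey := hmax (fun i => r⁻¹ * z i) (fun i => mul_nonneg (by positivity) (hz i)) hcon
    rw [MT_form_smul, hinv] at hkey
    calc MTform B z = s * (s⁻¹ * MTform B z) := by field_simp
    _ ≤ s * lam := mul_le_mul_of_nonneg_left hkey hs0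
    _ = lam * s := mul_comm _ _

lemma MT_modSet_bddAbove {n k : ℕ} (B : Fin n → (Fin k → Fin n) → ℝ) :
    BddAbove (modSet B) := by
  refine ⟨∑ i, ∑ j, |B i j|, ?_⟩
  rintro r ⟨lam, ⟨x, hx0, hx⟩, rfl⟩
  obtain ⟨i0, hi0⟩ := Function.ne_iff.1 hx0
  obtain ⟨i, _, hi⟩ := Finset.exists_max_image Finset.univ (fun i => ‖x i‖)
    ⟨i0, Finset.mem_univ i0⟩
  have hM : 0 < ‖x i‖ :=
    lt_of_lt_of_le (norm_pos_iff.2 (by simpa using hi0)) (hi i0 (Finset.mem_univ i0))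
  have h1 : ‖lam‖ * ‖x i‖ ^ k = ‖tApplyC B x i‖ := by
    rw [hx i, norm_mul, norm_pow]
  have h2 : ‖tApplyC B x i‖ ≤ (∑ j, |B i j|) * ‖x i‖ ^ k := by
    rw [tApplyC, Finset.sum_mul]
    refine le_trans (norm_sum_le _ _) (Finset.sum_le_sum fun j _ => ?_)
    rw [norm_mul, Complex.norm_real, Real.norm_eq_abs, norm_prod]
    refine mul_le_mul_of_nonneg_left ?_ (abs_nonneg _)
    calc ∏ t, ‖x (j t)‖ ≤ ∏ t : Fin k, ‖x i‖ :=
          Finset.prod_le_prod (fun t _ => norm_nonneg _)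
            (fun t _ => hi (j t) (Finset.mem_univ _))
    _ = ‖x i‖ ^ k := by rw [Finset.prod_const, Finset.card_univ, Fintype.card_fin]
  have h3 : ‖lam‖ * ‖x i‖ ^ k ≤ (∑ j, |B i j|) * ‖x i‖ ^ k :=
    le_trans (le_of_eq h1) h2
  have h4 : ‖lam‖ ≤ ∑ j, |B i j| := le_of_mul_le_mul_right h3 (pow_pos hM k)
  exact le_trans h4 (Finset.single_le_sum (f := fun i => ∑ j, |B i j|)
    (fun i _ => Finset.sum_nonneg fun j _ => abs_nonneg _) (Finset.mem_univ i))

lemma MT_eig {n k : ℕ} (B : Fin n → (Fin k → Fin n) → ℝ)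
    (hB : ∀ i j, 0 ≤ B i j) (hk : k ≠ 0)
    (Bsym : ∀ (g : Fin (k + 1) → Fin n) (σ : Equiv.Perm (Fin (k + 1))),
      B ((g ∘ σ) 0) (fun t => (g ∘ σ) t.succ) = B (g 0) (fun t => g t.succ))
    (y : Fin n → ℝ) (hy : ∀ i, 0 ≤ y i) (hy1 : ∑ i, y i ^ (k+1) = 1)
    (hmax : ∀ z : Fin n → ℝ, (∀ i, 0 ≤ z i) → (∑ i, z i ^ (k+1)) = 1 →
      MTform B z ≤ MTform B y) :
    ∀ i, tApplyR B y i = MTform B y * y i ^ k := by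
  intro i
  set lam := MTform B y with hlam
  have hle := MT_form_le B lam hmax
  set ψ : ℝ → ℝ := fun t => lam * (∑ j, (y j + t * (if j = i then (1:ℝ) else 0)) ^ (k+1)) -
      ∑ g : Fin (k+1) → Fin n, B (g 0) (fun t' => g t'.succ) *
        ∏ t', (y (g t') + t * (if g t' = i then (1:ℝ) else 0)) with hψ
  have hψ0 : ψ 0 = 0 := by
    have e1 : ∑ j, (y j + (0:ℝ) * (if j = i then (1:ℝ) else 0)) ^ (k+1) = 1 := by
      rw [← hy1]; exact Finset.sum_congr rfl fun j _ => by ring_nf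
    have e2 : ∑ g : Fin (k+1) → Fin n, B (g 0) (fun t' => g t'.succ) *
        ∏ t', (y (g t') + (0:ℝ) * (if g t' = i then (1:ℝ) else 0)) = lam := by
      rw [hlam, MTform]
      exact Finset.sum_congr rfl fun g _ => by
        congr 1; exact Finset.prod_congr rfl fun t' _ => by ring
    simp only [hψ]
    rw [e1, e2, mul_one, sub_self]
  have hψnn : ∀ t : ℝ, -y i ≤ t → 0 ≤ ψ t := by
    intro t ht
    have hz : ∀ j, 0 ≤ y j + t * (if j = i then (1:ℝ) else 0) := by
      intro j; by_cases hj : j = i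
      · subst hj; simp only [eq_self_iff_true, if_true, mul_one]; linarith
      · simp only [if_neg hj, mul_zero, add_zero]; exact hy j
    have h5 := hle (fun j => y j + t * (if j = i then (1:ℝ) else 0)) hz
    rw [MTform] at h5
    simp only [hψ]
    linarith
  have hder : HasDerivAt ψ (lam * ((k+1) * y i ^ k) - (k+1) * tApplyR B y i) 0 :=
    ((MT_hasDerivAt_constraint y i).const_mul lam).sub (MT_hasDerivAt_form B Bsym y i)
  have hknz : ((k:ℝ)+1) ≠ 0 := by positivity
  by_cases hyi : y i = 0
  · have h0 : 0 ≤ lam * ((k+1) * y i ^ k) - (k+1) * tApplyR B y i := by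
      refine MT_deriv_nonneg_of_min hder fun t ht => ?_
      rw [hψ0]; exact hψnn t (by linarith [hy i])
    have h2 : 0 ≤ tApplyR B y i := Finset.sum_nonneg fun j _ =>
      mul_nonneg (hB i j) (Finset.prod_nonneg fun t _ => hy _)
    have h3 : y i ^ k = 0 := by rw [hyi, zero_pow hk]
    rw [h3] at h0
    have h5 : ((k:ℝ)+1) * tApplyR B y i ≤ 0 := by simpa using h0
    have hk1 : (0:ℝ) < (k:ℝ)+1 := by positivity
    rw [h3, mul_zero]
    nlinarith
  · have hyi' : 0 < y i := lt_of_le_of_ne (hy i) (Ne.symm hyi)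
    have hloc : IsLocalMin ψ 0 := by
      have hev : ∀ᶠ t in nhds (0:ℝ), -y i < t := eventually_gt_nhds (by linarith)
      filter_upwards [hev] with t ht
      rw [hψ0]; exact hψnn t (le_of_lt ht)
    have hz := hloc.hasDerivAt_eq_zero hder
    have h4 : ((k:ℝ)+1) * (lam * y i ^ k) = ((k:ℝ)+1) * tApplyR B y i := by
      push_cast at hz ⊢; nlinarith [hz]
    exact (mul_left_cancel₀ hknz h4).symm

/-- an even-order symmetric M-tensor `A = cI - B` has a positive definite
associated homogeneous form. -/
theorem mTensor_form_posDef {n k : ℕ} (A B : Fin n → (Fin k → Fin n) → ℝ) (c : ℝ)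
    (hB : NonnegT B) (hc : specRad B < c)
    (hA : ∀ i j, A i j = c * idT n k i j - B i j)
    (heven : Even (k + 1))
    (hsymm : ∀ (g : Fin (k + 1) → Fin n) (σ : Equiv.Perm (Fin (k + 1))),
      A ((g ∘ σ) 0) (fun t => (g ∘ σ) t.succ) = A (g 0) (fun t => g t.succ)) :
    ∀ x : Fin n → ℝ, x ≠ 0 →
      0 < ∑ g : Fin (k + 1) → Fin n, A (g 0) (fun t => g t.succ) * ∏ t, x (g t) := by
  intro x hx
  classical
  obtain ⟨i0, hi0⟩ := Function.ne_iff.1 hx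
  have hi0' : x i0 ≠ 0 := by simpa using hi0
  have hk : k ≠ 0 := by
    rintro rfl
    rcases heven with ⟨r, hr⟩
    omega
  -- symmetry of B
  have hiff : ∀ h : Fin (k+1) → Fin n, ((∀ t : Fin k, h t.succ = h 0) ↔ ∀ u, h u = h 0) := by
    intro h
    constructor
    · intro H u; exact Fin.cases rfl (fun t => H t) u
    · intro H t; exact H _
  have idsym : ∀ (g : Fin (k+1) → Fin n) (σ : Equiv.Perm (Fin (k+1))),
      idT n k ((g ∘ σ) 0) (fun t => (g ∘ σ) t.succ) = idT n k (g 0) (fun t => g t.succ) := by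
    intro g σ
    simp only [idT]
    refine if_congr ?_ rfl rfl
    constructor
    · intro H t
      have h1 : ∀ u : Fin (k+1), (g ∘ σ) u = (g ∘ σ) 0 := (hiff (g ∘ σ)).1 H
      have h2 : ∀ v : Fin (k+1), g v = g (σ 0) := fun v => by
        have := h1 (σ.symm v)
        simpa using this
      rw [h2 t.succ, h2 0]
    · intro H t
      have h2 : ∀ v : Fin (k+1), g v = g 0 := (hiff g).1 H
      simp only [Function.comp]
      rw [h2 (σ t.succ), h2 (σ 0)]
  have Bsym : ∀ (g : Fin (k+1) → Fin n) (σ : Equiv.Perm (Fin (k+1))),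
      B ((g ∘ σ) 0) (fun t => (g ∘ σ) t.succ) = B (g 0) (fun t => g t.succ) := by
    intro g σ
    have h1 := hsymm g σ
    rw [hA, hA, idsym g σ] at h1
    linarith
  -- the compact set K and the maximizer
  set K : Set (Fin n → ℝ) := {y | (∀ i, 0 ≤ y i) ∧ ∑ i, y i ^ (k+1) = 1} with hK
  have hKne : K.Nonempty := by
    refine ⟨fun j => if j = i0 then 1 else 0, fun j => by by_cases h : j = i0 <;> simp [h], ?_⟩
    have e : ∀ j : Fin n, ((if j = i0 then (1:ℝ) else 0))^(k+1) = if j = i0 then 1 else 0 :=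
      fun j => by split <;> simp [zero_pow (Nat.succ_ne_zero k)]
    rw [Finset.sum_congr rfl fun j _ => e j, Finset.sum_ite_eq' Finset.univ i0 (fun _ => (1:ℝ))]
    simp
  have hcontsum : Continuous fun y : Fin n → ℝ => ∑ i, y i ^ (k+1) :=
    continuous_finset_sum _ fun i _ => (continuous_apply i).pow _
  have hKcl : IsClosed K := by
    have h1 : IsClosed {y : Fin n → ℝ | ∀ i, 0 ≤ y i} := by
      rw [Set.setOf_forall]
      exact isClosed_iInter fun i => isClosed_le continuous_const (continuous_apply i)
    have h2 : IsClosed {y : Fin n → ℝ | ∑ i, y i ^ (k+1) = 1} :=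
      isClosed_eq hcontsum continuous_const
    exact h1.inter h2
  have hKbd : Bornology.IsBounded K := by
    rw [isBounded_iff_forall_norm_le]
    refine ⟨1, fun y hy => ?_⟩
    rw [pi_norm_le_iff_of_nonneg zero_le_one]
    intro i
    rw [Real.norm_eq_abs, abs_of_nonneg (hy.1 i)]
    have h1 : y i ^ (k+1) ≤ 1 := by
      rw [← hy.2]
      exact Finset.single_le_sum (fun j _ => pow_nonneg (hy.1 j) _) (Finset.mem_univ i)
    by_contra hgt
    push_neg at hgt
    have := one_lt_pow₀ hgt (n := k+1) (by omega)
    linarith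
  have hKcp : IsCompact K := Metric.isCompact_of_isClosed_isBounded hKcl hKbd
  have hcontF : Continuous (MTform B) := by
    unfold MTform
    exact continuous_finset_sum _ fun g _ =>
      continuous_const.mul (continuous_finset_prod _ fun t _ => continuous_apply _)
  obtain ⟨y, hyK, hymax⟩ := hKcp.exists_isMaxOn hKne hcontF.continuousOn
  obtain ⟨hy, hy1⟩ := hyK
  set lam := MTform B y with hlam
  have hmax' : ∀ z : Fin n → ℝ, (∀ i, 0 ≤ z i) → (∑ i, z i ^ (k+1)) = 1 → MTform B z ≤ lam :=
    fun z h1 h2 => hymax (Set.mem_setOf.2 ⟨h1, h2⟩)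
  have heig := MT_eig B hB hk Bsym y hy hy1 hmax'
  have hlam0 : 0 ≤ lam := by
    rw [hlam, MTform]
    exact Finset.sum_nonneg fun g _ =>
      mul_nonneg (hB _ _) (Finset.prod_nonneg fun t _ => hy _)
  -- lam is an eigenvalue of B
  have hyne : ∃ j, y j ≠ 0 := by
    by_contra h
    push_neg at h
    rw [Finset.sum_congr rfl (fun j _ => by rw [h j, zero_pow (Nat.succ_ne_zero k)])] at hy1
    simp at hy1
  have hEig : IsEig B (lam : ℂ) := by
    refine ⟨fun i => ((y i : ℝ) : ℂ), ?_, ?_⟩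
    · obtain ⟨j, hj⟩ := hyne
      intro h0
      apply hj
      have h1 := congrFun h0 j
      rw [Pi.zero_apply] at h1
      exact_mod_cast h1
    · intro i
      have e1 : tApplyC B (fun i => ((y i : ℝ) : ℂ)) i = ((tApplyR B y i : ℝ) : ℂ) := by
        rw [tApplyC, tApplyR]
        push_cast
        rfl
      rw [e1, heig i]
      push_cast
      ring
  have hmem : lam ∈ modSet B :=
    ⟨(lam : ℂ), hEig, by rw [Complex.norm_real, Real.norm_eq_abs, abs_of_nonneg hlam0]⟩
  have hlamlt : lam < c :=
    lt_of_le_of_lt (le_csSup (MT_modSet_bddAbove B) hmem) hc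
  -- rewrite the goal
  have hgoal : ∑ g : Fin (k+1) → Fin n, A (g 0) (fun t => g t.succ) * ∏ t, x (g t)
      = c * (∑ i, x i ^ (k+1)) - MTform B x := by
    have e : ∀ g : Fin (k+1) → Fin n, A (g 0) (fun t => g t.succ) * ∏ t, x (g t)
        = c * (idT n k (g 0) (fun t => g t.succ) * ∏ t, x (g t))
          - B (g 0) (fun t => g t.succ) * ∏ t, x (g t) := fun g => by rw [hA]; ring
    rw [Finset.sum_congr rfl fun g _ => e g, Finset.sum_sub_distrib, ← Finset.mul_sum, MTform]
    congr 2
    have h2 : MTform (idT n k) x = ∑ i, x i ^ (k+1) := by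
      rw [MT_form_eq]
      refine Finset.sum_congr rfl fun i _ => ?_
      rw [MT_tApplyR_idT]
      ring
    exact h2
  rw [hgoal]
  have habs : MTform B x ≤ lam * ∑ i, x i ^ (k+1) := by
    have h1 : MTform B x ≤ MTform B (fun i => |x i|) := by
      rw [MTform, MTform]
      refine Finset.sum_le_sum fun g _ => mul_le_mul_of_nonneg_left ?_ (hB _ _)
      calc ∏ t, x (g t) ≤ |∏ t, x (g t)| := le_abs_self _
      _ = ∏ t, |x (g t)| := Finset.abs_prod _ _
    have h2 : MTform B (fun i => |x i|) ≤ lam * ∑ i, |x i| ^ (k+1) :=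
      MT_form_le B lam hmax' _ (fun i => abs_nonneg _)
    have h3 : ∑ i, |x i| ^ (k+1) = ∑ i, x i ^ (k+1) :=
      Finset.sum_congr rfl fun i _ => heven.pow_abs _
    rw [h3] at h2
    linarith
  have hS : 0 < ∑ i, x i ^ (k+1) := by
    refine Finset.sum_pos' (fun i _ => ?_) ⟨i0, Finset.mem_univ i0, ?_⟩
    · rw [← heven.pow_abs]; positivity
    · rw [← heven.pow_abs]; exact pow_pos (abs_pos.2 hi0') _
  nlinarith [mul_pos (sub_pos.2 hlamlt) hS]
end

section
/- Let A be a tensor with nonpositive off-diagonal entries and suppose A is diagonally dominant (Σ over non-diagonal index tuples |A_{i i2...im}| ≤ A_{i...i} for all i) with nonnegative diagonal. Then every eigenvalue λ of A satisfies Re λ ≥ 0. -/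
open scoped BigOperators

/-- a diagonally dominant tensor in `𝕫` with nonnegative diagonal has all
eigenvalues with nonnegative real part. -/
theorem diagDom_re_nonneg {n k : ℕ} (A : Fin n → (Fin k → Fin n) → ℝ)
    (hZ : ZTensor A) (hdiag : ∀ i, 0 ≤ A i (fun _ => i))
    (hdd : ∀ i, offDiagSum A i ≤ A i (fun _ => i)) :
    ∀ lam : ℂ, IsEig A lam → 0 ≤ lam.re := by
  classical
  rintro lam ⟨x, hx0, heig⟩
  obtain ⟨iw, hiw⟩ := Function.ne_iff.mp hx0
  simp only [Pi.zero_apply] at hiw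
  obtain ⟨i0, -, hmax⟩ := Finset.exists_max_image Finset.univ
    (fun i => ‖x i‖) ⟨iw, Finset.mem_univ iw⟩
  set a := A i0 (fun _ => i0) with ha
  set M := ‖x i0‖ with hM
  have hMpos : 0 < M := lt_of_lt_of_le (norm_pos_iff.mpr hiw)
    (hmax iw (Finset.mem_univ iw))
  have hfilter : Finset.univ.filter (fun j : Fin k → Fin n => ∀ t, j t = i0)
      = {fun _ => i0} := by
    ext j
    simp [funext_iff]
  have hsplit := Finset.sum_filter_add_sum_filter_not Finset.univ
    (fun j : Fin k → Fin n => ∀ t, j t = i0)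
    (fun j => (A i0 j : ℂ) * ∏ t, x (j t))
  rw [hfilter, Finset.sum_singleton] at hsplit
  have hprod : (∏ t : Fin k, x ((fun _ => i0) t)) = x i0 ^ k := by
    simp [Finset.prod_const]
  rw [hprod] at hsplit
  have heq := heig i0
  unfold tApplyC at heq
  rw [← hsplit] at heq
  have hkey : (lam - (a : ℂ)) * x i0 ^ k
      = ∑ j ∈ Finset.univ.filter (fun j : Fin k → Fin n => ¬ ∀ t, j t = i0),
          (A i0 j : ℂ) * ∏ t, x (j t) := by
    rw [sub_mul]
    rw [← heq]
    ring
  have habs : ‖lam - (a : ℂ)‖ * M ^ k ≤ offDiagSum A i0 * M ^ k := by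
    have h1 : ‖(lam - (a : ℂ)) * x i0 ^ k‖
        = ‖lam - (a : ℂ)‖ * M ^ k := by
      rw [norm_mul, norm_pow]
    rw [← h1, hkey]
    calc ‖∑ j ∈ Finset.univ.filter
          (fun j : Fin k → Fin n => ¬ ∀ t, j t = i0), (A i0 j : ℂ) * ∏ t, x (j t)‖
        ≤ ∑ j ∈ Finset.univ.filter (fun j : Fin k → Fin n => ¬ ∀ t, j t = i0),
            ‖(A i0 j : ℂ) * ∏ t, x (j t)‖ :=
          norm_sum_le _ _
      _ ≤ ∑ j ∈ Finset.univ.filter (fun j : Fin k → Fin n => ¬ ∀ t, j t = i0),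
            |A i0 j| * M ^ k := by
          apply Finset.sum_le_sum
          intro j _
          rw [norm_mul, norm_prod, Complex.norm_real, Real.norm_eq_abs]
          apply mul_le_mul_of_nonneg_left _ (abs_nonneg _)
          calc (∏ t, ‖x (j t)‖) ≤ ∏ _t : Fin k, M := by
                apply Finset.prod_le_prod
                · intro t _; exact norm_nonneg _
                · intro t _; exact hmax (j t) (Finset.mem_univ _)
            _ = M ^ k := by simp [Finset.prod_const]
      _ = offDiagSum A i0 * M ^ k := by
          rw [offDiagSum, Finset.sum_mul]
  have hM2 : ‖lam - (a : ℂ)‖ ≤ a := by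
    have h3 : ‖lam - (a : ℂ)‖ ≤ offDiagSum A i0 :=
      le_of_mul_le_mul_right habs (pow_pos hMpos k)
    exact h3.trans (hdd i0)
  have h4 : a - lam.re ≤ ‖lam - (a : ℂ)‖ := by
    have h5 : |(lam - (a : ℂ)).re| ≤ ‖lam - (a : ℂ)‖ :=
      Complex.abs_re_le_norm _
    have h6 : (lam - (a : ℂ)).re = lam.re - a := by simp
    rw [h6] at h5
    have := neg_le_abs (lam.re - a)
    linarith
  linarith
end
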